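/- arXiv:1412.3066 — 11 statements merged into one kernel-verified Lean document; each statement's English description precedes it below -/
import Mathlib

section
/- Every a × n latin rectangle with n > (a² - a + 1)(b - 1) contains a rainbow a × b subrectangle (a set of a rows and b columns whose ab entries are pairwise distinct), for positive integers a ≤ b. -/
/-- A latin rectangle: no repeated symbols in any row or any column. -/
def IsLatin {α β : Type*} (R : α × β → ℕ) : Prop :=
  (∀ i : α, ∀ j j' : β, R (i, j) = R (i, j') → j = j') ∧
  (∀ i i' : α, ∀ j : β, R (i, j) = R (i', j) → i = i')

/-- `R` has a rainbow `a × b` subrectangle: `a` rows and `b` columns on whose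
product `R` is injective. -/
def HasRainbow {α β : Type*} (R : α × β → ℕ) (a b : ℕ) : Prop :=
  ∃ (rows : Finset α) (cols : Finset β),
    rows.card = a ∧ cols.card = b ∧ Set.InjOn R ↑(rows ×ˢ cols)

theorem stmt_0 (a b n : ℕ) (ha : 0 < a) (hab : a ≤ b)
    (hn : (a ^ 2 - a + 1) * (b - 1) < n)
    (R : Fin a × Fin n → ℕ) (hR : IsLatin R) :
    HasRainbow R a b := by
  classical
  obtain ⟨hrow, hcol⟩ := hR
  suffices h : ∀ k, k ≤ b → ∃ cols : Finset (Fin n), cols.card = k ∧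
      Set.InjOn R ↑((Finset.univ : Finset (Fin a)) ×ˢ cols) by
    obtain ⟨cols, hc, hinj⟩ := h b le_rfl
    exact ⟨Finset.univ, cols, by simp, hc, hinj⟩
  intro k
  induction k with
  | zero => intro _; exact ⟨∅, rfl, by simp [Set.InjOn]⟩
  | succ k ih =>
    intro hk
    obtain ⟨cols, hc, hinj⟩ := ih (le_of_lt (Nat.lt_of_succ_le hk))
    -- the set of columns conflicting with a given column c'
    set Bad : Fin n → Finset (Fin n) :=
      fun c' => Finset.univ.filter (fun c => ∃ i i' : Fin a, R (i, c) = R (i', c')) with hBad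
    have hBadcard : ∀ c' : Fin n, (Bad c').card ≤ a ^ 2 - a + 1 := by
      intro c'
      have key : ((Bad c').erase c').card ≤ (Finset.univ : Finset (Fin a)).offDiag.card := by
        have hw : ∀ c ∈ (Bad c').erase c',
            ∃ p : Fin a × Fin a, p.1 ≠ p.2 ∧ R (p.1, c) = R (p.2, c') := by
          intro c hcmem
          obtain ⟨hne, hmem⟩ := Finset.mem_erase.mp hcmem
          obtain ⟨i, i', hii⟩ := (Finset.mem_filter.mp hmem).2
          refine ⟨(i, i'), ?_, hii⟩
          intro hEq
          have hEq' : i = i' := hEq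
          subst hEq'
          exact hne (hrow i c c' hii)
        set f : Fin n → Fin a × Fin a := fun c =>
          if h : ∃ p : Fin a × Fin a, p.1 ≠ p.2 ∧ R (p.1, c) = R (p.2, c') then h.choose
          else (⟨0, ha⟩, ⟨0, ha⟩) with hf
        apply Finset.card_le_card_of_injOn f
        · intro c hcmem
          have hx := hw c hcmem
          have : f c = hx.choose := dif_pos hx
          rw [this]
          have hp := hx.choose_spec
          simp [Finset.mem_offDiag, hp.1]
        · intro c1 h1 c2 h2 hfe
          have hx1 := hw c1 h1
          have hx2 := hw c2 h2
          have e1 : f c1 = hx1.choose := dif_pos hx1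
          have e2 : f c2 = hx2.choose := dif_pos hx2
          have hp1 := hx1.choose_spec
          have hp2 := hx2.choose_spec
          rw [e1, e2] at hfe
          have : R (hx1.choose.1, c1) = R (hx1.choose.1, c2) := by
            rw [hp1.2, hfe, hp2.2]
          exact hrow _ _ _ this
      have hoff : (Finset.univ : Finset (Fin a)).offDiag.card = a ^ 2 - a := by
        rw [Finset.offDiag_card]
        simp [sq]
      calc (Bad c').card ≤ ((Bad c').erase c').card + 1 := by
              by_cases hc' : c' ∈ Bad c'
              · rw [Finset.card_erase_of_mem hc']; omega
              · rw [Finset.erase_eq_of_notMem hc']; omega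
        _ ≤ a ^ 2 - a + 1 := by rw [hoff] at key; omega
    -- total conflict set
    have hconf : (cols.biUnion Bad).card < n := by
      have h1 : (cols.biUnion Bad).card ≤ k * (a ^ 2 - a + 1) := by
        calc (cols.biUnion Bad).card ≤ ∑ c' ∈ cols, (Bad c').card :=
              Finset.card_biUnion_le
          _ ≤ ∑ _c' ∈ cols, (a ^ 2 - a + 1) :=
              Finset.sum_le_sum (fun c' _ => hBadcard c')
          _ = k * (a ^ 2 - a + 1) := by rw [Finset.sum_const, hc, smul_eq_mul]
      have h2 : k * (a ^ 2 - a + 1) ≤ (b - 1) * (a ^ 2 - a + 1) :=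
        Nat.mul_le_mul_right _ (by omega)
      have h3 : (b - 1) * (a ^ 2 - a + 1) < n := by
        rw [mul_comm]; exact hn
      omega
    have hex : ∃ c : Fin n, c ∉ cols.biUnion Bad := by
      by_contra hcon
      push_neg at hcon
      have : (Finset.univ : Finset (Fin n)).card ≤ (cols.biUnion Bad).card :=
        Finset.card_le_card (fun c _ => hcon c)
      simp at this
      omega
    obtain ⟨c, hcnot⟩ := hex
    have hnc : ∀ c' ∈ cols, ∀ i i' : Fin a, R (i, c) ≠ R (i', c') := by
      intro c' hc' i i' hEq
      exact hcnot (Finset.mem_biUnion.mpr ⟨c', hc',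
        Finset.mem_filter.mpr ⟨Finset.mem_univ _, i, i', hEq⟩⟩)
    have hccols : c ∉ cols := by
      intro hmem
      exact hnc c hmem ⟨0, ha⟩ ⟨0, ha⟩ rfl
    refine ⟨insert c cols, ?_, ?_⟩
    · rw [Finset.card_insert_of_notMem hccols, hc]
    · intro p hp q hq heq
      simp only [Finset.coe_product, Set.mem_prod, Finset.mem_coe,
        Finset.mem_insert] at hp hq
      obtain ⟨p1, p2⟩ := p
      obtain ⟨q1, q2⟩ := q
      have hp2 := hp.2
      have hq2 := hq.2
      rcases hp2 with hp2 | hp2 <;> rcases hq2 with hq2 | hq2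
      · subst hp2; subst hq2
        have : p1 = q1 := hcol _ _ _ heq
        simp [this]
      · subst hp2
        exact absurd heq (hnc q2 hq2 p1 q1)
      · subst hq2
        exact absurd heq.symm (hnc p2 hp2 q1 p1)
      · exact hinj (by simp [Finset.mem_coe, hp2]) (by simp [Finset.mem_coe, hq2]) heq
end

section
/- Let R be an a × n latin rectangle, let t ≥ 1, and suppose T is a rainbow a × t subrectangle of R (given by all a rows and a set S of t columns with all entries distinct). If n - t > a·t·(a-1), then there exists a column c ∉ S such that no entry in column c equals any entry appearing in T; consequently S ∪ {c} yields a rainbow a × (t+1) subrectangle. -/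
theorem stmt_1 (a n t : ℕ) (ht : 1 ≤ t)
    (R : Fin a × Fin n → ℕ) (hR : IsLatin R)
    (S : Finset (Fin n)) (hS : S.card = t)
    (hT : Set.InjOn R ↑((Finset.univ : Finset (Fin a)) ×ˢ S))
    (hn : a * t * (a - 1) < n - t) :
    ∃ c : Fin n, c ∉ S ∧
      (∀ i i' : Fin a, ∀ j ∈ S, R (i, c) ≠ R (i', j)) ∧
      Set.InjOn R ↑((Finset.univ : Finset (Fin a)) ×ˢ insert c S) := by
  classical
  obtain ⟨hrow, hcol⟩ := hR
  -- a bad column shares a symbol with T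
  set P : Fin n → Prop := fun c =>
    ∃ p : (Fin a × Fin a) × Fin n, p.2 ∈ S ∧ p.1.1 ≠ p.1.2 ∧
      R (p.1.1, c) = R (p.1.2, p.2) with hP
  set Bad : Finset (Fin n) := Sᶜ.filter P with hBad
  have hcard : Bad.card ≤ a * t * (a - 1) := by
    rcases Bad.eq_empty_or_nonempty with he | ⟨c₀, hc₀⟩
    · simp [he]
    · obtain ⟨-, hPc₀⟩ := Finset.mem_filter.mp hc₀
      set f : Fin n → (Fin a × Fin a) × Fin n := fun c =>
        if h : P c then h.choose else hPc₀.choose with hf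
      have hmaps : ∀ c ∈ Bad, f c ∈ (Finset.univ : Finset (Fin a)).offDiag ×ˢ S := by
        intro c hc
        obtain ⟨-, hPc⟩ := Finset.mem_filter.mp hc
        simp only [hf, dif_pos hPc]
        obtain ⟨hj, hne, -⟩ := hPc.choose_spec
        simp [Finset.mem_offDiag, hne, hj]
      have hinj : Set.InjOn f ↑Bad := by
        intro c₁ h₁ c₂ h₂ heq
        obtain ⟨-, hP1⟩ := Finset.mem_filter.mp (by exact_mod_cast h₁ : c₁ ∈ Bad)
        obtain ⟨-, hP2⟩ := Finset.mem_filter.mp (by exact_mod_cast h₂ : c₂ ∈ Bad)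
        simp only [hf, dif_pos hP1, dif_pos hP2] at heq
        obtain ⟨-, -, hv1⟩ := hP1.choose_spec
        obtain ⟨-, -, hv2⟩ := hP2.choose_spec
        rw [heq] at hv1
        exact hrow _ _ _ (hv1.trans hv2.symm)
      calc Bad.card ≤ ((Finset.univ : Finset (Fin a)).offDiag ×ˢ S).card :=
            Finset.card_le_card_of_injOn f hmaps hinj
        _ = (a * a - a) * t := by
            simp [Finset.card_product, Finset.offDiag_card, hS]
        _ = a * t * (a - 1) := by
            rw [show a * a - a = a * (a - 1) by rw [Nat.mul_sub, mul_one]]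
            ring
  have hsub : Bad ⊆ Sᶜ := Finset.filter_subset P Sᶜ
  have hScompl : Sᶜ.card = n - t := by
    rw [Finset.card_compl, hS]; simp
  have hex : (Sᶜ \ Bad).Nonempty := by
    rw [← Finset.card_pos, Finset.card_sdiff_of_subset hsub]
    omega
  obtain ⟨c, hc⟩ := hex
  rw [Finset.mem_sdiff, Finset.mem_compl] at hc
  obtain ⟨hcS, hcBad⟩ := hc
  have hgood : ∀ i i' : Fin a, ∀ j ∈ S, R (i, c) ≠ R (i', j) := by
    intro i i' j hj hcontra
    apply hcBad
    rw [hBad, Finset.mem_filter]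
    refine ⟨Finset.mem_compl.mpr hcS, ⟨((i, i'), j), hj, ?_, hcontra⟩⟩
    intro hii
    have hii' : i = i' := hii
    subst hii'
    have h2 : c = j := hrow _ _ _ hcontra
    exact hcS (h2 ▸ hj)
  refine ⟨c, hcS, hgood, ?_⟩
  rintro ⟨i, j⟩ hij ⟨i', j'⟩ hij' heq
  simp only [Finset.coe_product, Set.mem_prod, Finset.mem_coe, Finset.mem_insert] at hij hij'
  rcases hij.2 with rfl | hjS
  · rcases hij'.2 with rfl | hj'S
    · exact Prod.ext (hcol _ _ _ heq) rfl
    · exact absurd heq (hgood i i' j' hj'S)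
  · rcases hij'.2 with rfl | hj'S
    · exact absurd heq.symm (hgood i' i j hjS)
    · exact hT (by simp [hjS]) (by simp [hj'S]) heq
end

section
/- For positive integers a ≤ b, m with a ≤ m ≤ n and n > (a² - a + 1)(b - 1), every m × n latin rectangle contains a rainbow a × b subrectangle. -/
theorem stmt_2 (a b m n : ℕ) (ha : 0 < a) (hab : a ≤ b) (ham : a ≤ m) (hmn : m ≤ n)
    (hn : (a ^ 2 - a + 1) * (b - 1) < n)
    (R : Fin m × Fin n → ℕ) (hR : IsLatin R) :
    HasRainbow R a b := by
  obtain ⟨rows, -, hrows⟩ :=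
    Finset.exists_subset_card_eq (s := (Finset.univ : Finset (Fin m))) (n := a) (by simpa using ham)
  have hrne : rows.Nonempty := Finset.card_pos.mp (hrows ▸ ha)
  set Bad : Fin n → Finset (Fin n) := fun j =>
    Finset.univ.filter (fun j' => ∃ i ∈ rows, ∃ i' ∈ rows, R (i, j) = R (i', j'))
    with hBad
  have hBadmem : ∀ j j' : Fin n,
      j' ∈ Bad j ↔ ∃ i ∈ rows, ∃ i' ∈ rows, R (i, j) = R (i', j') := by
    intro j j'; simp [hBad]
  have hsq : a ^ 2 = a * a := sq a
  have hBadcard : ∀ j, (Bad j).card ≤ a ^ 2 - a + 1 := by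
    intro j
    have hsub : Bad j ⊆ insert j ((rows.offDiag).biUnion (fun p =>
        Finset.univ.filter (fun j' => R (p.1, j) = R (p.2, j')))) := by
      intro j' hj'
      rw [hBadmem] at hj'
      obtain ⟨i, hi, i', hi', hR'⟩ := hj'
      by_cases hij : i = i'
      · subst hij
        have := hR.1 i j j' hR'
        simp [this]
      · refine Finset.mem_insert_of_mem ?_
        exact Finset.mem_biUnion.mpr ⟨(i, i'), Finset.mem_offDiag.mpr ⟨hi, hi', hij⟩,
          by simp [hR']⟩
    have h1 : ∀ p : Fin m × Fin m,
        (Finset.univ.filter (fun j' => R (p.1, j) = R (p.2, j'))).card ≤ 1 := by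
      intro p
      refine Finset.card_le_one.mpr ?_
      intro x hx y hy
      simp only [Finset.mem_filter] at hx hy
      exact hR.1 p.2 x y (hx.2.symm.trans hy.2)
    calc (Bad j).card ≤ _ := Finset.card_le_card hsub
      _ ≤ ((rows.offDiag).biUnion (fun p =>
            Finset.univ.filter (fun j' => R (p.1, j) = R (p.2, j')))).card + 1 :=
          Finset.card_insert_le _ _
      _ ≤ (∑ p ∈ rows.offDiag,
            (Finset.univ.filter (fun j' => R (p.1, j) = R (p.2, j'))).card) + 1 :=
          Nat.add_le_add_right Finset.card_biUnion_le 1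
      _ ≤ rows.offDiag.card * 1 + 1 := by
          refine Nat.add_le_add_right ?_ 1
          simpa only [smul_eq_mul] using Finset.sum_le_card_nsmul _ _ 1 (fun p _ => h1 p)
      _ ≤ a ^ 2 - a + 1 := by
          rw [Finset.offDiag_card, hrows, hsq]
          omega
  have key : ∀ k, k ≤ b → ∃ cols : Finset (Fin n), cols.card = k ∧
      ∀ j ∈ cols, ∀ j' ∈ cols, ∀ i ∈ rows, ∀ i' ∈ rows,
        R (i, j) = R (i', j') → i = i' ∧ j = j' := by
    intro k
    induction k with
    | zero => intro _; exact ⟨∅, by simp, by simp⟩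
    | succ k ih =>
      intro hk
      obtain ⟨cols, hcard, hgood⟩ := ih (Nat.le_of_succ_le hk)
      set F := cols.biUnion Bad with hF
      have hFcard : F.card < n := by
        calc F.card ≤ ∑ j ∈ cols, (Bad j).card := Finset.card_biUnion_le
          _ ≤ cols.card * (a ^ 2 - a + 1) := by
              simpa using Finset.sum_le_card_nsmul _ _ _ (fun j _ => hBadcard j)
          _ ≤ (b - 1) * (a ^ 2 - a + 1) := by
              apply Nat.mul_le_mul_right
              omega
          _ < n := by rw [mul_comm]; exact hn
      obtain ⟨j₀, hj₀⟩ : ∃ j₀ : Fin n, j₀ ∉ F := by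
        by_contra h
        push_neg at h
        have hsub : (Finset.univ : Finset (Fin n)) ⊆ F := fun x _ => h x
        have := Finset.card_le_card hsub
        simp at this
        omega
      have hself : ∀ j ∈ cols, j ∈ Bad j := by
        intro j hj
        obtain ⟨i, hi⟩ := hrne
        exact (hBadmem j j).mpr ⟨i, hi, i, hi, rfl⟩
      have hj₀cols : j₀ ∉ cols := fun h => hj₀ (Finset.mem_biUnion.mpr ⟨j₀, h, hself j₀ h⟩)
      refine ⟨insert j₀ cols, by rw [Finset.card_insert_of_notMem hj₀cols, hcard], ?_⟩
      intro j hj j' hj' i hi i' hi' hRe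
      rcases Finset.mem_insert.mp hj with h1 | h1 <;>
        rcases Finset.mem_insert.mp hj' with h2 | h2
      · rw [h1, h2] at hRe
        exact ⟨hR.2 i i' j₀ hRe, h1.trans h2.symm⟩
      · exfalso
        apply hj₀
        rw [h1] at hRe
        exact Finset.mem_biUnion.mpr
          ⟨j', h2, (hBadmem j' j₀).mpr ⟨i', hi', i, hi, hRe.symm⟩⟩
      · exfalso
        apply hj₀
        rw [h2] at hRe
        exact Finset.mem_biUnion.mpr
          ⟨j, h1, (hBadmem j j₀).mpr ⟨i, hi, i', hi', hRe⟩⟩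
      · exact hgood j h1 j' h2 i hi i' hi' hRe
  obtain ⟨cols, hcc, hgood⟩ := key b le_rfl
  refine ⟨rows, cols, hrows, hcc, ?_⟩
  rintro ⟨i, j⟩ hp ⟨i', j'⟩ hq hRe
  simp only [Finset.coe_product, Set.mem_prod, Finset.mem_coe] at hp hq
  obtain ⟨h1, h2⟩ := hgood j hp.2 j' hq.2 i hp.1 i' hq.1 hRe
  simp [h1, h2]
end

section
/- If there exists an a × (a² - a + 1) latin rectangle with no rainbow a × 2 subrectangle, then any two distinct columns of this rectangle, viewed as a-element sets of symbols, intersect in exactly one symbol. -/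
theorem stmt_3 (a : ℕ) (ha : 0 < a)
    (R : Fin a × Fin (a ^ 2 - a + 1) → ℕ) (hR : IsLatin R)
    (hnr : ¬ HasRainbow R a 2) :
    ∀ c c' : Fin (a ^ 2 - a + 1), c ≠ c' →
      ((Finset.univ.image fun i => R (i, c)) ∩
        (Finset.univ.image fun i => R (i, c'))).card = 1 := by
  classical
  obtain ⟨hrow, hcol⟩ := hR
  intro c c' hcc'
  set col : Fin (a ^ 2 - a + 1) → Finset ℕ :=
    fun j => Finset.univ.image fun i => R (i, j) with hcoldef
  show (col c ∩ col c').card = 1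
  -- every pair of distinct columns intersects
  have hmeet : ∀ j j' : Fin (a ^ 2 - a + 1), j ≠ j' → (col j ∩ col j').Nonempty := by
    intro j j' hjj'
    by_contra hempty
    rw [Finset.not_nonempty_iff_eq_empty] at hempty
    apply hnr
    refine ⟨Finset.univ, {j, j'}, by simp, ?_, ?_⟩
    · rw [Finset.card_insert_of_notMem (by simpa using hjj'), Finset.card_singleton]
    · rintro ⟨i1, k1⟩ h1 ⟨i2, k2⟩ h2 heq
      simp only [Finset.coe_product, Set.mem_prod, Finset.mem_coe, Finset.mem_insert,
        Finset.mem_singleton] at h1 h2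
      rcases eq_or_ne k1 k2 with rfl | hk
      · exact Prod.ext (hcol _ _ _ heq) rfl
      · exfalso
        have hs1 : R (i1, k1) ∈ col k1 := Finset.mem_image_of_mem _ (Finset.mem_univ i1)
        have hs2 : R (i1, k1) ∈ col k2 := by
          rw [heq]; exact Finset.mem_image_of_mem _ (Finset.mem_univ i2)
        have hmem : R (i1, k1) ∈ col j ∩ col j' := by
          rcases h1.2 with rfl | rfl <;> rcases h2.2 with rfl | rfl
          · exact absurd rfl hk
          · exact Finset.mem_inter.mpr ⟨hs1, hs2⟩
          · exact Finset.mem_inter.mpr ⟨hs2, hs1⟩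
          · exact absurd rfl hk
        rw [hempty] at hmem
        exact absurd hmem (Finset.notMem_empty _)
  -- a row chooser: for a symbol in column j, the row where it occurs
  have hex : ∀ (j : Fin (a ^ 2 - a + 1)) (s : ℕ), s ∈ col j → ∃ i, R (i, j) = s := by
    intro j s hs
    simpa [hcoldef] using hs
  set F : Fin (a ^ 2 - a + 1) → ℕ → Fin a := fun j s =>
    if h : ∃ i, R (i, j) = s then h.choose else ⟨0, ha⟩ with hFdef
  have hF : ∀ (j : Fin (a ^ 2 - a + 1)) (s : ℕ), s ∈ col j → R (F j s, j) = s := by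
    intro j s hs
    have h := hex j s hs
    simp only [hFdef, dif_pos h]
    exact h.choose_spec
  -- the incidence set
  set S : Finset (Σ _ : Fin (a ^ 2 - a + 1), ℕ) :=
    (Finset.univ.erase c).sigma (fun j => col c ∩ col j) with hSdef
  have hScard : S.card = ∑ j ∈ Finset.univ.erase c, (col c ∩ col j).card :=
    Finset.card_sigma _ _
  -- injection into off-diagonal pairs of rows
  have hSle : S.card ≤ a * a - a := by
    have := Finset.card_le_card_of_injOn
      (f := fun p : Σ _ : Fin (a ^ 2 - a + 1), ℕ => (F c p.2, F p.1 p.2))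
      (s := S) (t := Finset.univ.offDiag) ?_ ?_
    · calc S.card ≤ (Finset.univ : Finset (Fin a)).offDiag.card := this
        _ = a * a - a := by rw [Finset.offDiag_card]; simp
    · intro p hp
      obtain ⟨j, s⟩ := p
      simp only [hSdef, Finset.mem_coe, Finset.mem_sigma, Finset.mem_erase, Finset.mem_inter] at hp
      obtain ⟨⟨hjc, -⟩, hsc, hsj⟩ := hp
      simp only [Finset.mem_coe, Finset.mem_offDiag, Finset.mem_univ, true_and]
      intro hFeq
      have : R (F c s, c) = R (F c s, j) := by
        rw [hF c s hsc, hFeq, hF j s hsj]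
      exact hjc (hrow _ _ _ this).symm
    · rintro ⟨j1, s1⟩ h1 ⟨j2, s2⟩ h2 heq
      simp only [hSdef, Finset.mem_coe, Finset.mem_sigma, Finset.mem_erase,
        Finset.mem_inter] at h1 h2
      obtain ⟨⟨-, -⟩, hs1c, hs1j⟩ := h1
      obtain ⟨⟨-, -⟩, hs2c, hs2j⟩ := h2
      have h1' : F c s1 = F c s2 := congrArg Prod.fst heq
      have h2' : F j1 s1 = F j2 s2 := congrArg Prod.snd heq
      have hs : s1 = s2 := by
        rw [← hF c s1 hs1c, ← hF c s2 hs2c, h1']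
      subst hs
      have hj : j1 = j2 := by
        apply hrow (F j1 s1)
        rw [hF j1 s1 hs1j, h2', hF j2 s1 hs2j]
      subst hj
      rfl
  -- each term is at least 1, and there are a*a - a terms
  have hterms : (Finset.univ.erase c).card = a * a - a := by
    rw [Finset.card_erase_of_mem (Finset.mem_univ c), Finset.card_univ, Fintype.card_fin]
    have : a ^ 2 = a * a := sq a
    omega
  have hone : ∀ j ∈ Finset.univ.erase c, 1 ≤ (col c ∩ col j).card := by
    intro j hj
    exact Finset.card_pos.mpr (hmeet c j (Finset.ne_of_mem_erase hj).symm)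
  -- conclude each term equals 1
  by_contra hne
  have hc'mem : c' ∈ Finset.univ.erase c := Finset.mem_erase.mpr ⟨hcc'.symm, Finset.mem_univ c'⟩
  have h2le : 2 ≤ (col c ∩ col c').card := by
    have := hone c' hc'mem
    omega
  have hsum : ∑ j ∈ Finset.univ.erase c, (col c ∩ col j).card ≥ a * a - a + 1 := by
    have hsplit : ∑ j ∈ Finset.univ.erase c, (col c ∩ col j).card
        = (col c ∩ col c').card + ∑ j ∈ (Finset.univ.erase c).erase c', (col c ∩ col j).card :=
      (Finset.add_sum_erase _ _ hc'mem).symm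
    have hrest : ((Finset.univ.erase c).erase c').card
        ≤ ∑ j ∈ (Finset.univ.erase c).erase c', (col c ∩ col j).card := by
      have h := Finset.card_nsmul_le_sum ((Finset.univ.erase c).erase c')
        (fun j => (col c ∩ col j).card) 1
        (fun j hj => hone j (Finset.mem_of_mem_erase hj))
      simpa using h
    have hrestcard : ((Finset.univ.erase c).erase c').card = a * a - a - 1 := by
      rw [Finset.card_erase_of_mem hc'mem, hterms]
    have ha2 : a ≤ a * a := Nat.le_mul_of_pos_left a ha
    omega
  omega
end

section
/- If there exists an a × (a² - a + 1) latin rectangle with no rainbow a × 2 subrectangle, then every symbol appearing in the rectangle appears in exactly a distinct columns. -/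
theorem stmt_4 (a : ℕ) (ha : 0 < a)
    (R : Fin a × Fin (a ^ 2 - a + 1) → ℕ) (hR : IsLatin R)
    (hnr : ¬ HasRainbow R a 2) :
    ∀ s : ℕ, (∃ p, R p = s) →
      (Finset.univ.filter fun c : Fin (a ^ 2 - a + 1) =>
        ∃ i : Fin a, R (i, c) = s).card = a := by
  classical
  intro s hs
  obtain ⟨⟨i₀, c₀⟩, hp⟩ := hs
  set Cols : ℕ → Finset (Fin (a ^ 2 - a + 1)) :=
    fun v => Finset.univ.filter (fun c => ∃ i, R (i, c) = v) with hCols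
  -- each symbol appears in at most a columns
  have claim1 : ∀ v : ℕ, (Cols v).card ≤ a := by
    intro v
    have : (Cols v).card ≤ (Finset.univ : Finset (Fin a)).card := by
      apply Finset.card_le_card_of_injOn
        (fun c => if h : ∃ i, R (i, c) = v then h.choose else i₀)
      · intro c hc; exact Finset.mem_univ _
      · intro c hc c' hc' hcc'
        simp only [hCols, Finset.coe_filter, Set.mem_setOf_eq, Finset.mem_univ,
          true_and] at hc hc'
        simp only at hcc'
        rw [dif_pos hc, dif_pos hc'] at hcc'
        have e1 : R (hc.choose, c) = v := hc.choose_spec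
        have e2 : R (hc'.choose, c') = v := hc'.choose_spec
        rw [hcc'] at e1
        exact hR.1 _ _ _ (e1.trans e2.symm)
    simpa using this
  -- every other column shares a symbol with column c₀
  have claim2 : ∀ c : Fin (a ^ 2 - a + 1), c ≠ c₀ → ∃ t : Fin a, c ∈ Cols (R (t, c₀)) := by
    intro c hc
    by_contra hcon
    push_neg at hcon
    have hnot : ∀ (t i : Fin a), R (i, c) ≠ R (t, c₀) := by
      intro t i h
      exact hcon t (by simp [hCols]; exact ⟨i, h⟩)
    apply hnr
    refine ⟨Finset.univ, {c₀, c}, by simp, ?_, ?_⟩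
    · rw [Finset.card_insert_of_notMem (by simp [Ne.symm hc]), Finset.card_singleton]
    · rintro ⟨i, j⟩ hij ⟨i', j'⟩ hij' heq
      simp only [Finset.coe_product, Set.mem_prod, Finset.mem_coe, Finset.mem_insert,
        Finset.mem_singleton, Finset.mem_univ, true_and] at hij hij'
      rcases hij with rfl | rfl <;> rcases hij' with rfl | rfl
      · rw [hR.2 _ _ _ heq]
      · exact absurd heq.symm (hnot i i')
      · exact absurd heq (hnot i' i)
      · rw [hR.2 _ _ _ heq]
  set T : Fin a → Finset (Fin (a ^ 2 - a + 1)) :=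
    fun t => (Cols (R (t, c₀))).erase c₀ with hT
  have hc₀mem : ∀ t : Fin a, c₀ ∈ Cols (R (t, c₀)) := fun t => by
    simp [hCols]
  have cardT_le : ∀ t : Fin a, (T t).card ≤ a - 1 := by
    intro t
    rw [hT]
    rw [Finset.card_erase_of_mem (hc₀mem t)]
    exact Nat.sub_le_sub_right (claim1 _) 1
  have cover : Finset.univ.erase c₀ ⊆ Finset.univ.biUnion T := by
    intro c hc
    have hne : c ≠ c₀ := (Finset.mem_erase.mp hc).1
    obtain ⟨t, ht⟩ := claim2 c hne
    exact Finset.mem_biUnion.mpr ⟨t, Finset.mem_univ _, Finset.mem_erase.mpr ⟨hne, ht⟩⟩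
  have hsq : a * (a - 1) = a ^ 2 - a := by
    rw [Nat.mul_sub, Nat.mul_one, sq]
  have hcard_erase : (Finset.univ.erase c₀ : Finset (Fin (a ^ 2 - a + 1))).card = a ^ 2 - a := by
    rw [Finset.card_erase_of_mem (Finset.mem_univ _)]
    simp
  have key : ∀ t : Fin a, (T t).card = a - 1 := by
    by_contra hk
    push_neg at hk
    obtain ⟨t₀, ht₀⟩ := hk
    have hlt : (T t₀).card < a - 1 := lt_of_le_of_ne (cardT_le t₀) ht₀
    have hsum : ∑ t : Fin a, (T t).card < ∑ _t : Fin a, (a - 1) :=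
      Finset.sum_lt_sum (fun t _ => cardT_le t) ⟨t₀, Finset.mem_univ _, hlt⟩
    have h1 : (Finset.univ.erase c₀ : Finset (Fin (a ^ 2 - a + 1))).card ≤
        (Finset.univ.biUnion T).card := Finset.card_le_card cover
    have h2 : (Finset.univ.biUnion T).card ≤ ∑ t : Fin a, (T t).card :=
      Finset.card_biUnion_le
    have h3 : ∑ _t : Fin a, (a - 1) = a * (a - 1) := by simp [Finset.sum_const, mul_comm]
    omega
  -- now apply with t = i₀
  have hkey := key i₀
  rw [hT] at hkey
  simp only [hp] at hkey
  rw [Finset.card_erase_of_mem (by simpa [hp] using hc₀mem i₀)] at hkey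
  have hmem : c₀ ∈ Cols s := by simpa [hp] using hc₀mem i₀
  have hpos : 1 ≤ (Cols s).card := Finset.card_pos.mpr ⟨c₀, hmem⟩
  show (Cols s).card = a
  omega
end

section
/- If there exists an a × (a² - a + 1) latin rectangle with no rainbow a × 2 subrectangle, then the set of symbols appearing in the rectangle, together with the columns viewed as a-element sets of symbols, forms a projective plane of order a - 1: there are a² - a + 1 symbols, each column (line) contains a symbols, any two distinct columns meet in exactly one symbol, and any two distinct symbols lie in a common column. -/
theorem stmt_5 (a : ℕ) (ha : 0 < a)
    (R : Fin a × Fin (a ^ 2 - a + 1) → ℕ) (hR : IsLatin R)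
    (hnr : ¬ HasRainbow R a 2) :
    (Finset.univ.image R).card = a ^ 2 - a + 1 ∧
    (∀ c, (Finset.univ.image fun i => R (i, c)).card = a) ∧
    (∀ c c' : Fin (a ^ 2 - a + 1), c ≠ c' →
      ((Finset.univ.image fun i => R (i, c)) ∩
        (Finset.univ.image fun i => R (i, c'))).card = 1) ∧
    (∀ s s' : ℕ, s ∈ Finset.univ.image R → s' ∈ Finset.univ.image R → s ≠ s' →
      ∃ c, s ∈ Finset.univ.image (fun i => R (i, c)) ∧
        s' ∈ Finset.univ.image (fun i => R (i, c))) := by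
  classical
  obtain ⟨hrow, hcolinj⟩ := hR
  have harith : a * (a - 1) + 1 = a ^ 2 - a + 1 := by
    rcases a with _ | k
    · omega
    · have h : (k + 1) ^ 2 = (k + 1) * k + (k + 1) := by ring
      simp only [Nat.add_sub_cancel]
      omega
  set col : Fin (a ^ 2 - a + 1) → Finset ℕ := fun c => Finset.univ.image fun i => R (i, c) with hcol
  have colmem : ∀ (s : ℕ) (c : Fin (a ^ 2 - a + 1)), s ∈ col c ↔ ∃ i, R (i, c) = s := by
    intro s c; simp [hcol]
  have colcard : ∀ c, (col c).card = a := by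
    intro c
    show (Finset.univ.image fun i => R (i, c)).card = a
    rw [Finset.card_image_of_injective _ (fun i i' h => hcolinj i i' c h)]
    simp
  set S := Finset.univ.image R with hS
  have colsubS : ∀ c, col c ⊆ S := by
    intro c s hs
    obtain ⟨i, hi⟩ := (colmem s c).mp hs
    exact hS ▸ Finset.mem_image.mpr ⟨(i, c), Finset.mem_univ _, hi⟩
  set occ : ℕ → Finset (Fin (a ^ 2 - a + 1)) := fun s => Finset.univ.filter fun c => s ∈ col c with hocc
  have occmem : ∀ s c, c ∈ occ s ↔ s ∈ col c := by
    intro s c; simp [hocc]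
  -- each symbol appears in at most `a` columns
  have occle : ∀ s : ℕ, (occ s).card ≤ a := by
    intro s
    have key : ∀ c' ∈ occ s, ∃ i, R (i, c') = s := by
      intro c' hc'; exact (colmem s c').mp ((occmem s c').mp hc')
    have hle : (occ s).card ≤ (Finset.univ : Finset (Fin a)).card := by
      apply Finset.card_le_card_of_injOn
        (fun c' => if h : ∃ i, R (i, c') = s then h.choose else ⟨0, ha⟩)
      · intro _ _; exact Finset.mem_univ _
      · intro c1 h1 c2 h2 heq
        have e1 := key c1 (Finset.mem_coe.mp h1)
        have e2 := key c2 (Finset.mem_coe.mp h2)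
        simp only [dif_pos e1, dif_pos e2] at heq
        have s1 := e1.choose_spec
        have s2 := e2.choose_spec
        apply hrow e1.choose c1 c2
        rw [s1, heq, s2]
    simpa using hle
  -- any two distinct columns share a symbol
  have internonempty : ∀ c c' : Fin (a ^ 2 - a + 1), c ≠ c' → ∃ s, s ∈ col c ∧ s ∈ col c' := by
    intro c c' hne
    by_contra hcon
    push_neg at hcon
    apply hnr
    refine ⟨Finset.univ, {c, c'}, by simp, ?_, ?_⟩
    · rw [Finset.card_insert_of_notMem (by simpa using hne)]; simp
    · rintro ⟨i, j⟩ hij ⟨i', j'⟩ hij' heq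
      simp only [Finset.coe_product, Set.mem_prod, Finset.mem_coe, Finset.coe_insert,
        Set.mem_insert_iff, Finset.coe_singleton, Set.mem_singleton_iff] at hij hij'
      by_cases hjj : j = j'
      · subst hjj
        have := hcolinj i i' j heq
        subst this; rfl
      · exfalso
        have hm1 : R (i, j) ∈ col j := (colmem _ _).mpr ⟨i, rfl⟩
        have hm2 : R (i, j) ∈ col j' := (colmem _ _).mpr ⟨i', heq.symm⟩
        rcases hij.2 with h1 | h1 <;> rcases hij'.2 with h2 | h2 <;> subst h1 <;> subst h2
        · exact hjj rfl
        · exact hcon _ hm1 hm2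
        · exact hcon _ hm2 hm1
        · exact hjj rfl
  -- the key counting argument
  have keycount : ∀ c : Fin (a ^ 2 - a + 1), (∀ c' ∈ Finset.univ.erase c, (col c ∩ col c').card = 1) ∧
      (∀ s ∈ col c, (occ s).card = a) := by
    intro c
    have hswap : ∑ c' ∈ Finset.univ.erase c, (col c ∩ col c').card
        = ∑ s ∈ col c, ((occ s).erase c).card := by
      have t1 : ∀ c' : Fin (a ^ 2 - a + 1), (col c ∩ col c').card
          = ∑ s ∈ col c, if s ∈ col c' then 1 else 0 := by
        intro c'
        rw [← Finset.filter_mem_eq_inter, Finset.card_filter]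
      have t2 : ∀ s : ℕ, ((occ s).erase c).card
          = ∑ c' ∈ Finset.univ.erase c, if s ∈ col c' then 1 else 0 := by
        intro s
        rw [← Finset.card_filter]
        congr 1
        ext c'
        simp only [Finset.mem_filter, Finset.mem_erase, occmem, Finset.mem_univ, and_true]
      simp only [t1, t2]
      exact Finset.sum_comm
    have hlow : (Finset.univ.erase c).card
        ≤ ∑ c' ∈ Finset.univ.erase c, (col c ∩ col c').card := by
      calc (Finset.univ.erase c).card = ∑ _c' ∈ Finset.univ.erase c, 1 := by simp
        _ ≤ _ := by
          apply Finset.sum_le_sum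
          intro c' hc'
          have hne : c ≠ c' := fun h => (Finset.mem_erase.mp hc').1 h.symm
          obtain ⟨s, hs1, hs2⟩ := internonempty c c' hne
          exact Finset.card_pos.mpr ⟨s, Finset.mem_inter.mpr ⟨hs1, hs2⟩⟩
    have hup : ∑ s ∈ col c, ((occ s).erase c).card ≤ ∑ _s ∈ col c, (a - 1) := by
      apply Finset.sum_le_sum
      intro s hs
      have hc : c ∈ occ s := (occmem s c).mpr hs
      rw [Finset.card_erase_of_mem hc]
      have := occle s
      omega
    have hcards : (Finset.univ.erase c).card = a * (a - 1) := by
      rw [Finset.card_erase_of_mem (Finset.mem_univ c), Finset.card_univ, Fintype.card_fin]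
      omega
    have hconst : ∑ _s ∈ col c, (a - 1) = a * (a - 1) := by
      rw [Finset.sum_const, colcard, smul_eq_mul]
    have heq : ∑ c' ∈ Finset.univ.erase c, (col c ∩ col c').card = a * (a - 1) := by
      rw [hswap] at hlow ⊢
      rw [hconst] at hup
      omega
    constructor
    · have h1 : ∑ _c' ∈ Finset.univ.erase c, 1
          = ∑ c' ∈ Finset.univ.erase c, (col c ∩ col c').card := by
        rw [heq]; simp [hcards]
      have h2 := (Finset.sum_eq_sum_iff_of_le (f := fun _ => 1)
        (g := fun c' => (col c ∩ col c').card) ?_).mp h1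
      · intro c' hc'
        exact (h2 c' hc').symm
      · intro c' hc'
        have hne : c ≠ c' := fun h => (Finset.mem_erase.mp hc').1 h.symm
        obtain ⟨s, hs1, hs2⟩ := internonempty c c' hne
        exact Finset.card_pos.mpr ⟨s, Finset.mem_inter.mpr ⟨hs1, hs2⟩⟩
    · have h1 : ∑ s ∈ col c, ((occ s).erase c).card = ∑ _s ∈ col c, (a - 1) := by
        rw [← hswap, heq, hconst]
      have h2 := (Finset.sum_eq_sum_iff_of_le
        (f := fun s => ((occ s).erase c).card) (g := fun _ => a - 1) ?_).mp h1
      · intro s hs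
        have h3 := h2 s hs
        have hc : c ∈ occ s := (occmem s c).mpr hs
        rw [Finset.card_erase_of_mem hc] at h3
        have h4 : 0 < (occ s).card := Finset.card_pos.mpr ⟨c, hc⟩
        have h5 := occle s
        omega
      · intro s hs
        show ((occ s).erase c).card ≤ a - 1
        have hc : c ∈ occ s := (occmem s c).mpr hs
        rw [Finset.card_erase_of_mem hc]
        have := occle s
        omega
  have inter1 : ∀ c c' : Fin (a ^ 2 - a + 1), c ≠ c' → (col c ∩ col c').card = 1 := by
    intro c c' hne
    exact (keycount c).1 c' (Finset.mem_erase.mpr ⟨hne.symm, Finset.mem_univ _⟩)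
  have occa : ∀ s ∈ S, (occ s).card = a := by
    intro s hs
    obtain ⟨p, -, hp⟩ := Finset.mem_image.mp (hS ▸ hs)
    have : s ∈ col p.2 := (colmem s p.2).mpr ⟨p.1, by rw [← hp]⟩
    exact (keycount p.2).2 s this
  -- number of symbols
  have Scard : S.card = a ^ 2 - a + 1 := by
    have h1 : ∑ c : Fin (a ^ 2 - a + 1), (col c).card = (a ^ 2 - a + 1) * a := by
      simp [colcard, Finset.card_univ, mul_comm]
    have h2 : ∑ c : Fin (a ^ 2 - a + 1), (col c).card = ∑ s ∈ S, (occ s).card := by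
      have t1 : ∀ c : Fin (a ^ 2 - a + 1), (col c).card = ∑ s ∈ S, if s ∈ col c then 1 else 0 := by
        intro c
        rw [← Finset.card_filter, Finset.filter_mem_eq_inter,
          Finset.inter_eq_right.mpr (colsubS c)]
      have t2 : ∀ s : ℕ, (occ s).card = ∑ c : Fin (a ^ 2 - a + 1), if s ∈ col c then 1 else 0 := by
        intro s
        rw [← Finset.card_filter]
      simp only [t1, t2]
      exact Finset.sum_comm
    have h3 : ∑ s ∈ S, (occ s).card = S.card * a := by
      rw [Finset.sum_congr rfl occa, Finset.sum_const, smul_eq_mul]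
    have : S.card * a = (a ^ 2 - a + 1) * a := by rw [← h3, ← h2, h1]
    exact Nat.eq_of_mul_eq_mul_right ha this
  -- two symbols lie in a common column
  have pairs : ∀ s s' : ℕ, s ∈ S → s' ∈ S → s ≠ s' →
      ∃ c, s ∈ col c ∧ s' ∈ col c := by
    intro s s' hs hs' hne
    by_contra hcon
    push_neg at hcon
    have hOcard : (occ s).card = a := occa s hs
    set B := (occ s).biUnion (fun c => (col c).erase s) with hB
    have hdisj : ∀ c1 ∈ occ s, ∀ c2 ∈ occ s, c1 ≠ c2 →
        Disjoint ((col c1).erase s) ((col c2).erase s) := by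
      intro c1 h1 c2 h2 h12
      have hint : col c1 ∩ col c2 = {s} := by
        obtain ⟨b, hb⟩ := Finset.card_eq_one.mp (inter1 c1 c2 h12)
        have hsmem : s ∈ col c1 ∩ col c2 :=
          Finset.mem_inter.mpr ⟨(occmem s c1).mp h1, (occmem s c2).mp h2⟩
        rw [hb] at hsmem ⊢
        rw [Finset.mem_singleton] at hsmem
        rw [hsmem]
      rw [Finset.disjoint_left]
      intro x hx1 hx2
      have hx : x ∈ col c1 ∩ col c2 :=
        Finset.mem_inter.mpr ⟨Finset.mem_of_mem_erase hx1, Finset.mem_of_mem_erase hx2⟩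
      rw [hint, Finset.mem_singleton] at hx
      exact (Finset.ne_of_mem_erase hx1) hx
    have hBcard : B.card = a * (a - 1) := by
      rw [hB, Finset.card_biUnion hdisj]
      have t : ∀ c ∈ occ s, ((col c).erase s).card = a - 1 := by
        intro c hc
        rw [Finset.card_erase_of_mem ((occmem s c).mp hc), colcard]
      rw [Finset.sum_congr rfl t, Finset.sum_const, hOcard, smul_eq_mul]
    have hsB : s ∉ B := by
      simp only [hB, Finset.mem_biUnion]
      rintro ⟨c, -, hmem⟩
      exact (Finset.ne_of_mem_erase hmem) rfl
    have hs'B : s' ∉ B := by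
      simp only [hB, Finset.mem_biUnion]
      rintro ⟨c, hc, hmem⟩
      exact hcon c ((occmem s c).mp hc) (Finset.mem_of_mem_erase hmem)
    have hs'i : s' ∉ insert s B := by
      simp only [Finset.mem_insert]
      rintro (h | h)
      · exact hne h.symm
      · exact hs'B h
    have hsub : insert s' (insert s B) ⊆ S := by
      intro x hx
      simp only [Finset.mem_insert] at hx
      rcases hx with h | h | h
      · exact h ▸ hs'
      · exact h ▸ hs
      · obtain ⟨c, -, hmem⟩ := Finset.mem_biUnion.mp (hB ▸ h)
        exact colsubS c (Finset.mem_of_mem_erase hmem)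
    have hle := Finset.card_le_card hsub
    rw [Finset.card_insert_of_notMem hs'i, Finset.card_insert_of_notMem hsB,
      hBcard, Scard] at hle
    omega
  refine ⟨Scard, colcard, fun c c' h => ?_, fun s s' hs hs' hne => ?_⟩
  · exact inter1 c c' h
  · obtain ⟨c, h1, h2⟩ := pairs s s' hs hs' hne
    exact ⟨c, h1, h2⟩
end

section
/- Let A be an m × n latin rectangle with positive integer entries bounded by t, and let B be an r × s latin rectangle with nonnegative integer entries. Define A' to be the rm × sn array whose (u,v) block (for u ∈ Fin r, v ∈ Fin s) is A + t·B(u,v)·J, where J is the all-ones m × n matrix. Then A' is an rm × sn latin rectangle. -/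
lemma key {t a a' b b' : ℕ} (h1 : 1 ≤ a) (h2 : a ≤ t) (h1' : 1 ≤ a') (h2' : a' ≤ t)
    (h : a + t * b = a' + t * b') : a = a' ∧ b = b' := by
  have ht : 0 < t := lt_of_lt_of_le h1 h2
  have heq : a - 1 + t * b = a' - 1 + t * b' := by omega
  have hb : b = b' := by
    have d1 : (a - 1 + t * b) / t = b := by
      rw [Nat.add_mul_div_left _ _ ht, Nat.div_eq_of_lt (by omega), Nat.zero_add]
    have d2 : (a' - 1 + t * b') / t = b' := by
      rw [Nat.add_mul_div_left _ _ ht, Nat.div_eq_of_lt (by omega), Nat.zero_add]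
    rw [← d1, heq, d2]
  constructor
  · have : t * b = t * b' := by rw [hb]
    omega
  · exact hb

theorem stmt_9 (m n r s t : ℕ)
    (A : Fin m × Fin n → ℕ) (hA : IsLatin A)
    (hAt : ∀ p, 1 ≤ A p ∧ A p ≤ t)
    (B : Fin r × Fin s → ℕ) (hB : IsLatin B) :
    IsLatin (fun p : (Fin r × Fin m) × (Fin s × Fin n) =>
      A (p.1.2, p.2.2) + t * B (p.1.1, p.2.1)) := by
  constructor
  · rintro ⟨u, i⟩ ⟨v, j⟩ ⟨v', j'⟩ h
    simp only at h
    obtain ⟨hAeq, hBeq⟩ := key (hAt (i, j)).1 (hAt (i, j)).2 (hAt (i, j')).1 (hAt (i, j')).2 h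
    exact Prod.ext (hB.1 u v v' hBeq) (hA.1 i j j' hAeq)
  · rintro ⟨u, i⟩ ⟨u', i'⟩ ⟨v, j⟩ h
    simp only at h
    obtain ⟨hAeq, hBeq⟩ := key (hAt (i, j)).1 (hAt (i, j)).2 (hAt (i', j)).1 (hAt (i', j)).2 h
    exact Prod.ext (hB.2 u u' v hBeq) (hA.2 i i' j hAeq)
end

section
/- Let A be an m × n latin rectangle with positive entries bounded by t and with no rainbow a × b subrectangle, and let B be an r × s latin rectangle with nonnegative integer entries. Then the rm × sn latin rectangle A' defined by A'((u,i),(v,j)) = A(i,j) + t·B(u,v) contains no rainbow (r(a-1)+1) × (s(b-1)+1) subrectangle. -/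
/-- Pigeonhole extraction: from `k*(c-1)+1` elements of a finset in `Fin k × γ`,
there is a fiber element `u` and a subset of size `c` all with first coordinate `u`. -/
lemma aux_fiber {k : ℕ} {γ : Type*} (S : Finset (Fin k × γ)) (c : ℕ)
    (hS : S.card = k * (c - 1) + 1) :
    ∃ (u : Fin k) (S₀ : Finset (Fin k × γ)), S₀ ⊆ S ∧ S₀.card = c ∧
      ∀ p ∈ S₀, p.1 = u := by
  obtain ⟨u, -, hu⟩ := Finset.exists_lt_card_fiber_of_mul_lt_card_of_maps_to
    (s := S) (t := (Finset.univ : Finset (Fin k)))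
    (f := fun p => p.1) (n := c - 1) (fun p _ => Finset.mem_univ _)
    (by simp [hS, Nat.lt_succ_iff])
  have hle : c ≤ (S.filter fun p => p.1 = u).card := by omega
  obtain ⟨S₀, hsub, hcard⟩ := Finset.exists_subset_card_eq hle
  exact ⟨u, S₀, hsub.trans (Finset.filter_subset _ _), hcard,
    fun p hp => (Finset.mem_filter.mp (hsub hp)).2⟩

theorem stmt_10 (m n r s t a b : ℕ)
    (A : Fin m × Fin n → ℕ) (hA : IsLatin A)
    (hAt : ∀ p, 1 ≤ A p ∧ A p ≤ t)
    (hnr : ¬ HasRainbow A a b)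
    (B : Fin r × Fin s → ℕ) (hB : IsLatin B) :
    ¬ HasRainbow (fun p : (Fin r × Fin m) × (Fin s × Fin n) =>
        A (p.1.2, p.2.2) + t * B (p.1.1, p.2.1))
      (r * (a - 1) + 1) (s * (b - 1) + 1) := by
  rintro ⟨rows, cols, hrc, hcc, hinj⟩
  apply hnr
  obtain ⟨u, rows₀, hrsub, hrcard, hru⟩ := aux_fiber rows a hrc
  obtain ⟨v, cols₀, hcsub, hccard, hcv⟩ := aux_fiber cols b hcc
  refine ⟨rows₀.image Prod.snd, cols₀.image Prod.snd, ?_, ?_, ?_⟩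
  · rw [Finset.card_image_of_injOn, hrcard]
    intro p hp q hq h
    exact Prod.ext ((hru p hp).trans (hru q hq).symm) h
  · rw [Finset.card_image_of_injOn, hccard]
    intro p hp q hq h
    exact Prod.ext ((hcv p hp).trans (hcv q hq).symm) h
  · rintro ⟨i, j⟩ hij ⟨i', j'⟩ hij' heq
    simp only [Finset.coe_product, Set.mem_prod, Finset.mem_coe,
      Finset.mem_image] at hij hij'
    obtain ⟨⟨p, hp, hpi⟩, ⟨q, hq, hqj⟩⟩ := hij
    obtain ⟨⟨p', hp', hpi'⟩, ⟨q', hq', hqj'⟩⟩ := hij'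
    have hpui : p = (u, i) := Prod.ext (hru p hp) hpi
    have hpui' : p' = (u, i') := Prod.ext (hru p' hp') hpi'
    have hqvj : q = (v, j) := Prod.ext (hcv q hq) hqj
    have hqvj' : q' = (v, j') := Prod.ext (hcv q' hq') hqj'
    have h1 : ((u, i), (v, j)) ∈ (↑(rows ×ˢ cols) :
        Set ((Fin r × Fin m) × (Fin s × Fin n))) := by
      simp only [Finset.coe_product, Set.mem_prod, Finset.mem_coe]
      exact ⟨hrsub (hpui ▸ hp), hcsub (hqvj ▸ hq)⟩
    have h2 : ((u, i'), (v, j')) ∈ (↑(rows ×ˢ cols) :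
        Set ((Fin r × Fin m) × (Fin s × Fin n))) := by
      simp only [Finset.coe_product, Set.mem_prod, Finset.mem_coe]
      exact ⟨hrsub (hpui' ▸ hp'), hcsub (hqvj' ▸ hq')⟩
    have := hinj h1 h2 (by simpa using heq)
    simp only [Prod.mk.injEq] at this
    exact Prod.ext this.1.2 this.2.2
end

section
/- Every 3 × 6 latin rectangle contains a rainbow 2 × 3 subrectangle or a rainbow 3 × 2 subrectangle. -/
set_option maxHeartbeats 4000000
set_option synthInstance.maxSize 5000
set_option synthInstance.maxHeartbeats 4000000

/-- The clash graph on columns for a fixed (ordered) pair of rows. -/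
def Eg (R : Fin 3 × Fin 6 → ℕ) (r r' : Fin 3) (j k : Fin 6) : Prop :=
  R (r, j) = R (r', k) ∨ R (r', j) = R (r, k)

lemma D1 : ∀ v u : Fin 6, ∃ p q r s : Fin 6, p ≠ q ∧ p ≠ r ∧ p ≠ s ∧ q ≠ r ∧ q ≠ s ∧ r ≠ s ∧
    p ≠ v ∧ q ≠ v ∧ r ≠ v ∧ s ≠ v ∧ p ≠ u ∧ q ≠ u ∧ r ≠ u ∧ s ≠ u := by decide

lemma D2 : ∀ x y : Fin 6, x ≠ y → x ≠ 0 → y ≠ 0 → ∃ p q r : Fin 6, p ≠ q ∧ p ≠ r ∧ q ≠ r ∧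
    p ≠ 0 ∧ q ≠ 0 ∧ r ≠ 0 ∧ p ≠ x ∧ q ≠ x ∧ r ≠ x ∧ p ≠ y ∧ q ≠ y ∧ r ≠ y ∧
    (∀ w : Fin 6, w = 0 ∨ w = x ∨ w = y ∨ w = p ∨ w = q ∨ w = r) := by decide

lemma S2 : ∀ x1 y1 x2 y2 x3 y3 : Fin 6, 0 < x1 → x1 < y1 →
    0 < x2 → x2 < y2 → 0 < x3 → x3 < y3 →
    ∃ j k : Fin 6, j ≠ k ∧
      ¬((j = 0 ∨ j = x1 ∨ j = y1) ↔ (k = 0 ∨ k = x1 ∨ k = y1)) ∧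
      ¬((j = 0 ∨ j = x2 ∨ j = y2) ↔ (k = 0 ∨ k = x2 ∨ k = y2)) ∧
      ¬((j = 0 ∨ j = x3 ∨ j = y3) ↔ (k = 0 ∨ k = x3 ∨ k = y3)) := by decide

section
variable {R : Fin 3 × Fin 6 → ℕ}

lemma Esymm {r r' : Fin 3} {j k : Fin 6} (h : Eg R r r' j k) : Eg R r r' k j := by
  rcases h with h | h
  · exact Or.inr h.symm
  · exact Or.inl h.symm

lemma Eirr (hR : IsLatin R) {r r' : Fin 3} (hrr : r ≠ r') (j : Fin 6) : ¬ Eg R r r' j j := by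
  rintro (h | h)
  · exact hrr (hR.2 r r' j h)
  · exact hrr ((hR.2 r' r j h).symm)

lemma Edeg2 (hR : IsLatin R) {r r' : Fin 3} {j k1 k2 k3 : Fin 6}
    (h1 : Eg R r r' j k1) (h2 : Eg R r r' j k2) (h3 : Eg R r r' j k3) :
    k1 = k2 ∨ k1 = k3 ∨ k2 = k3 := by
  rcases h1 with a1 | b1 <;> rcases h2 with a2 | b2 <;> rcases h3 with a3 | b3
  · exact Or.inl (hR.1 r' k1 k2 (a1.symm.trans a2))
  · exact Or.inl (hR.1 r' k1 k2 (a1.symm.trans a2))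
  · exact Or.inr (Or.inl (hR.1 r' k1 k3 (a1.symm.trans a3)))
  · exact Or.inr (Or.inr (hR.1 r k2 k3 (b2.symm.trans b3)))
  · exact Or.inr (Or.inr (hR.1 r' k2 k3 (a2.symm.trans a3)))
  · exact Or.inr (Or.inl (hR.1 r k1 k3 (b1.symm.trans b3)))
  · exact Or.inl (hR.1 r k1 k2 (b1.symm.trans b2))
  · exact Or.inl (hR.1 r k1 k2 (b1.symm.trans b2))

lemma rainbow23 (hR : IsLatin R) {r r' : Fin 3} (hrr : r ≠ r') {x y z : Fin 6}
    (hxy : x ≠ y) (hxz : x ≠ z) (hyz : y ≠ z)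
    (h : ∀ b b' : Fin 6, b ≠ b' → (b = x ∨ b = y ∨ b = z) → (b' = x ∨ b' = y ∨ b' = z) →
      R (r, b) ≠ R (r', b')) : HasRainbow R 2 3 := by
  refine ⟨{r, r'}, {x, y, z}, ?_, ?_, ?_⟩
  · rw [Finset.card_insert_of_notMem (by simpa using hrr), Finset.card_singleton]
  · rw [Finset.card_insert_of_notMem (by simp [hxy, hxz]),
      Finset.card_insert_of_notMem (by simpa using hyz), Finset.card_singleton]
  · rintro ⟨a1, a2⟩ ha ⟨b1, b2⟩ hb hab
    simp only [Finset.coe_product, Set.mem_prod, Finset.mem_coe, Finset.mem_insert,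
      Finset.mem_singleton] at ha hb
    obtain ⟨ha1, ha2⟩ := ha
    obtain ⟨hb1, hb2⟩ := hb
    by_cases h12 : a1 = b1
    · subst h12
      simp only [Prod.mk.injEq]
      exact ⟨trivial, hR.1 a1 a2 b2 hab⟩
    · by_cases h22 : a2 = b2
      · subst h22
        exact absurd (hR.2 a1 b1 a2 hab) h12
      · exfalso
        rcases ha1 with rfl | rfl <;> rcases hb1 with rfl | rfl
        · exact h12 rfl
        · exact h a2 b2 h22 ha2 hb2 hab
        · exact h b2 a2 (Ne.symm h22) hb2 ha2 hab.symm
        · exact h12 rfl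

lemma Ehits (hR : IsLatin R) {r r' : Fin 3} (hrr : r ≠ r') (h23 : ¬ HasRainbow R 2 3)
    {x y z : Fin 6} (hxy : x ≠ y) (hxz : x ≠ z) (hyz : y ≠ z) :
    Eg R r r' x y ∨ Eg R r r' x z ∨ Eg R r r' y z := by
  by_contra hc
  push_neg at hc
  obtain ⟨n1, n2, n3⟩ := hc
  simp only [Eg, not_or] at n1 n2 n3
  refine h23 (rainbow23 hR hrr hxy hxz hyz ?_)
  rintro b b' hbb (rfl | rfl | rfl) (rfl | rfl | rfl) heq
  · exact hbb rfl
  · exact n1.1 heq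
  · exact n2.1 heq
  · exact n1.2 heq.symm
  · exact hbb rfl
  · exact n3.1 heq
  · exact n2.2 heq.symm
  · exact n3.2 heq.symm
  · exact hbb rfl

lemma rainbow32 (hR : IsLatin R) {j k : Fin 6} (hjk : j ≠ k)
    (h : ∀ a a' : Fin 3, a ≠ a' → R (a, j) ≠ R (a', k)) : HasRainbow R 3 2 := by
  refine ⟨Finset.univ, {j, k}, by simp, ?_, ?_⟩
  · rw [Finset.card_insert_of_notMem (by simpa using hjk), Finset.card_singleton]
  · rintro ⟨a1, a2⟩ ha ⟨b1, b2⟩ hb hab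
    simp only [Finset.coe_product, Set.mem_prod, Finset.mem_coe, Finset.mem_insert,
      Finset.mem_singleton, Finset.mem_univ, true_and] at ha hb
    by_cases h12 : a1 = b1
    · subst h12
      simp only [Prod.mk.injEq]
      exact ⟨trivial, hR.1 a1 a2 b2 hab⟩
    · by_cases h22 : a2 = b2
      · subst h22
        exact absurd (hR.2 a1 b1 a2 hab) h12
      · exfalso
        rcases ha with rfl | rfl <;> rcases hb with rfl | rfl
        · exact h22 rfl
        · exact h a1 b1 h12 hab
        · exact h b1 a1 (Ne.symm h12) hab.symm
        · exact h22 rfl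

lemma clash (hR : IsLatin R) (h32 : ¬ HasRainbow R 3 2) {j k : Fin 6} (hjk : j ≠ k) :
    Eg R 0 1 j k ∨ Eg R 0 2 j k ∨ Eg R 1 2 j k := by
  by_contra hc
  push_neg at hc
  obtain ⟨n1, n2, n3⟩ := hc
  simp only [Eg, not_or] at n1 n2 n3
  refine h32 (rainbow32 hR hjk ?_)
  intro a a' haa
  fin_cases a <;> fin_cases a' <;>
    first
      | exact absurd rfl haa
      | exact n1.1
      | exact n1.2
      | exact n2.1
      | exact n2.2
      | exact n3.1
      | exact n3.2

lemma twoTriangles (E : Fin 6 → Fin 6 → Prop)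
    (hsym : ∀ j k, E j k → E k j)
    (hirr : ∀ j, ¬ E j j)
    (hdeg : ∀ j k1 k2 k3, E j k1 → E j k2 → E j k3 → k1 = k2 ∨ k1 = k3 ∨ k2 = k3)
    (hhits : ∀ x y z : Fin 6, x ≠ y → x ≠ z → y ≠ z → E x y ∨ E x z ∨ E y z) :
    ∃ x y : Fin 6, 0 < x ∧ x < y ∧
      ∀ j k, E j k → ((j = 0 ∨ j = x ∨ j = y) ↔ (k = 0 ∨ k = x ∨ k = y)) := by
  have A : ∀ v u : Fin 6, (∀ w, E v w → w = u) → False := by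
    intro v u hvu
    obtain ⟨p, q, r, s, hpq, hpr, hps, hqr, hqs, hrs,
      hpv, hqv, hrv, hsv, hpu, hqu, hru, hsu⟩ := D1 v u
    have hadj : ∀ a b : Fin 6, a ≠ v → a ≠ u → b ≠ v → b ≠ u → a ≠ b → E a b := by
      intro a b hav hau hbv hbu hab
      rcases hhits v a b (Ne.symm hav) (Ne.symm hbv) hab with h | h | h
      · exact absurd (hvu a h) hau
      · exact absurd (hvu b h) hbu
      · exact h
    have h1 := hadj p q hpv hpu hqv hqu hpq
    have h2 := hadj p r hpv hpu hrv hru hpr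
    have h3 := hadj p s hpv hpu hsv hsu hps
    rcases hdeg p q r s h1 h2 h3 with h | h | h
    · exact hqr h
    · exact hqs h
    · exact hrs h
  have MD : ∀ v, ∃ x y, x ≠ y ∧ E v x ∧ E v y := by
    intro v
    by_contra hc
    push_neg at hc
    by_cases hex : ∃ w, E v w
    · obtain ⟨u, hu⟩ := hex
      refine A v u (fun w hw => ?_)
      by_contra hne
      exact hc w u hne hw hu
    · exact A v v (fun w hw => absurd ⟨w, hw⟩ hex)
  obtain ⟨x, y, hxy, hx, hy⟩ := MD 0
  have hx0 : x ≠ 0 := fun h => hirr 0 (h ▸ hx)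
  have hy0 : y ≠ 0 := fun h => hirr 0 (h ▸ hy)
  obtain ⟨p, q, r, hpq, hpr, hqr, hp0, hq0, hr0, hpx, hqx, hrx, hpy, hqy, hry, huniv⟩ :=
    D2 x y hxy hx0 hy0
  have n0 : ∀ w, E 0 w → w = x ∨ w = y := by
    intro w hw
    rcases hdeg 0 w x y hw hx hy with h | h | h
    · exact Or.inl h
    · exact Or.inr h
    · exact absurd h hxy
  have eaux : ∀ a b : Fin 6, a ≠ 0 → a ≠ x → a ≠ y → b ≠ 0 → b ≠ x → b ≠ y → a ≠ b → E a b := by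
    intro a b ha0 hax hay hb0 hbx hby hab
    rcases hhits 0 a b (Ne.symm ha0) (Ne.symm hb0) hab with h | h | h
    · rcases n0 a h with h' | h'
      · exact absurd h' hax
      · exact absurd h' hay
    · rcases n0 b h with h' | h'
      · exact absurd h' hbx
      · exact absurd h' hby
    · exact h
  have epq : E p q := eaux p q hp0 hpx hpy hq0 hqx hqy hpq
  have epr : E p r := eaux p r hp0 hpx hpy hr0 hrx hry hpr
  have eqr : E q r := eaux q r hq0 hqx hqy hr0 hrx hry hqr
  have np : ∀ w, E p w → w = q ∨ w = r := by
    intro w hw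
    rcases hdeg p w q r hw epq epr with h | h | h
    · exact Or.inl h
    · exact Or.inr h
    · exact absurd h hqr
  have nq : ∀ w, E q w → w = p ∨ w = r := by
    intro w hw
    rcases hdeg q w p r hw (hsym p q epq) eqr with h | h | h
    · exact Or.inl h
    · exact Or.inr h
    · exact absurd h hpr
  have nr : ∀ w, E r w → w = p ∨ w = q := by
    intro w hw
    rcases hdeg r w p q hw (hsym p r epr) (hsym q r eqr) with h | h | h
    · exact Or.inl h
    · exact Or.inr h
    · exact absurd h hpq
  have C : ∀ j k, E j k → (j = 0 ∨ j = x ∨ j = y) → (k = 0 ∨ k = x ∨ k = y) := by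
    intro j k hjk hj
    rcases huniv k with hk | hk | hk | hk | hk | hk
    · exact Or.inl hk
    · exact Or.inr (Or.inl hk)
    · exact Or.inr (Or.inr hk)
    · exfalso
      subst hk
      rcases np j (hsym j k hjk) with h | h <;> subst h
      · rcases hj with h | h | h
        exacts [hq0 h, hqx h, hqy h]
      · rcases hj with h | h | h
        exacts [hr0 h, hrx h, hry h]
    · exfalso
      subst hk
      rcases nq j (hsym j k hjk) with h | h <;> subst h
      · rcases hj with h | h | h
        exacts [hp0 h, hpx h, hpy h]
      · rcases hj with h | h | h
        exacts [hr0 h, hrx h, hry h]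
    · exfalso
      subst hk
      rcases nr j (hsym j k hjk) with h | h <;> subst h
      · rcases hj with h | h | h
        exacts [hp0 h, hpx h, hpy h]
      · rcases hj with h | h | h
        exacts [hq0 h, hqx h, hqy h]
  have key : ∀ j k, E j k → ((j = 0 ∨ j = x ∨ j = y) ↔ (k = 0 ∨ k = x ∨ k = y)) :=
    fun j k hjk => ⟨C j k hjk, C k j (hsym j k hjk)⟩
  rcases hxy.lt_or_gt with h | h
  · exact ⟨x, y, Fin.pos_of_ne_zero hx0, h, key⟩
  · exact ⟨y, x, Fin.pos_of_ne_zero hy0, h, fun j k hjk => by have := key j k hjk; tauto⟩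

end

theorem stmt_11 (R : Fin 3 × Fin 6 → ℕ) (hR : IsLatin R) :
    HasRainbow R 2 3 ∨ HasRainbow R 3 2 := by
  by_contra hc
  push_neg at hc
  obtain ⟨h23, h32⟩ := hc
  have mk : ∀ r r' : Fin 3, r ≠ r' → ∃ x y : Fin 6, 0 < x ∧ x < y ∧
      ∀ j k, Eg R r r' j k → ((j = 0 ∨ j = x ∨ j = y) ↔ (k = 0 ∨ k = x ∨ k = y)) := by
    intro r r' hrr
    exact twoTriangles (Eg R r r') (fun j k => Esymm) (Eirr hR hrr)
      (fun j k1 k2 k3 => Edeg2 hR) (fun x y z => Ehits hR hrr h23)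
  obtain ⟨x1, y1, hx1, hy1, H1⟩ := mk 0 1 (by decide)
  obtain ⟨x2, y2, hx2, hy2, H2⟩ := mk 0 2 (by decide)
  obtain ⟨x3, y3, hx3, hy3, H3⟩ := mk 1 2 (by decide)
  obtain ⟨j, k, hjk, n1, n2, n3⟩ := S2 x1 y1 x2 y2 x3 y3 hx1 hy1 hx2 hy2 hx3 hy3
  rcases clash hR h32 hjk with h | h | h
  exacts [n1 (H1 j k h), n2 (H2 j k h), n3 (H3 j k h)]
end

section
/- For every integer b ≥ 2, the vertex anti-Ramsey number AR_V(K_{2,b}) equals 3b. That is: (i) every 2 × (3b - 2) latin rectangle contains a rainbow 2 × b subrectangle, and (ii) for all positive integers m ≤ n with m + n < 3b, there exists an m × n latin rectangle containing neither a rainbow 2 × b nor a rainbow b × 2 subrectangle. -/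
namespace AR14

/-- digitwise addition mod 3 on `s` base-3 digits -/
def add3 : ℕ → ℕ → ℕ → ℕ
  | 0, _, _ => 0
  | s+1, a, c => (a % 3 + c % 3) % 3 + 3 * add3 s (a / 3) (c / 3)

/-- digitwise subtraction mod 3 on `s` base-3 digits -/
def sub3 : ℕ → ℕ → ℕ → ℕ
  | 0, _, _ => 0
  | s+1, a, c => (a % 3 + (3 - c % 3)) % 3 + 3 * sub3 s (a / 3) (c / 3)

lemma add3_lt : ∀ s a c, add3 s a c < 3 ^ s := by
  intro s
  induction s with
  | zero => intro a c; simp [add3]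
  | succ s ih =>
    intro a c
    have h := ih (a / 3) (c / 3)
    simp only [add3, pow_succ]
    omega

lemma sub3_lt : ∀ s a c, sub3 s a c < 3 ^ s := by
  intro s
  induction s with
  | zero => intro a c; simp [sub3]
  | succ s ih =>
    intro a c
    have h := ih (a / 3) (c / 3)
    simp only [sub3, pow_succ]
    omega

lemma add3_zero : ∀ s a, a < 3 ^ s → add3 s a 0 = a := by
  intro s
  induction s with
  | zero => intro a ha; simp [add3]; simp at ha; omega
  | succ s ih =>
    intro a ha
    have h3 : a / 3 < 3 ^ s := by
      rw [pow_succ] at ha; omega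
    simp only [add3, Nat.zero_mod, Nat.add_zero, Nat.zero_div, ih (a/3) h3]
    · omega

lemma add3_cancel : ∀ s a a' e, a < 3 ^ s → a' < 3 ^ s → add3 s a e = add3 s a' e → a = a' := by
  intro s
  induction s with
  | zero => intro a a' e ha ha' _; simp at ha ha'; omega
  | succ s ih =>
    intro a a' e ha ha' h
    simp only [add3] at h
    have h1 : (a % 3 + e % 3) % 3 < 3 := by omega
    have h2 : (a' % 3 + e % 3) % 3 < 3 := by omega
    have hd : (a % 3 + e % 3) % 3 = (a' % 3 + e % 3) % 3 ∧
        add3 s (a / 3) (e / 3) = add3 s (a' / 3) (e / 3) := by omega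
    have hm : a % 3 = a' % 3 := by omega
    have ht : a / 3 = a' / 3 := by
      apply ih _ _ (e / 3) _ _ hd.2 <;> (rw [pow_succ] at *; omega)
    omega

lemma add3_triple : ∀ s d, add3 s (add3 s d d) d = 0 := by
  intro s
  induction s with
  | zero => intro d; simp [add3]
  | succ s ih =>
    intro d
    simp only [add3]
    have h1 : ((d % 3 + d % 3) % 3 + 3 * add3 s (d / 3) (d / 3)) % 3 = (d % 3 + d % 3) % 3 := by
      omega
    have h2 : ((d % 3 + d % 3) % 3 + 3 * add3 s (d / 3) (d / 3)) / 3 = add3 s (d / 3) (d / 3) := by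
      omega
    rw [h1, h2, ih (d / 3)]
    omega

lemma add3_sub3 : ∀ s a c, a < 3 ^ s → add3 s (sub3 s a c) c = a := by
  intro s
  induction s with
  | zero => intro a c ha; simp at ha; simp [add3, sub3]; omega
  | succ s ih =>
    intro a c ha
    simp only [add3, sub3]
    have h1 : ((a % 3 + (3 - c % 3)) % 3 + 3 * sub3 s (a / 3) (c / 3)) % 3
        = (a % 3 + (3 - c % 3)) % 3 := by omega
    have h2 : ((a % 3 + (3 - c % 3)) % 3 + 3 * sub3 s (a / 3) (c / 3)) / 3
        = sub3 s (a / 3) (c / 3) := by omega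
    have h3 : a / 3 < 3 ^ s := by rw [pow_succ] at ha; omega
    rw [h1, h2, ih (a / 3) (c / 3) h3]
    omega

lemma add3_assoc : ∀ s a u v, add3 s (add3 s a u) v = add3 s a (add3 s u v) := by
  intro s
  induction s with
  | zero => intro a u v; simp [add3]
  | succ s ih =>
    intro a u v
    simp only [add3]
    have h1 : ((a % 3 + u % 3) % 3 + 3 * add3 s (a / 3) (u / 3)) % 3 = (a % 3 + u % 3) % 3 := by
      omega
    have h2 : ((a % 3 + u % 3) % 3 + 3 * add3 s (a / 3) (u / 3)) / 3 = add3 s (a / 3) (u / 3) := by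
      omega
    have h3 : ((u % 3 + v % 3) % 3 + 3 * add3 s (u / 3) (v / 3)) % 3 = (u % 3 + v % 3) % 3 := by
      omega
    have h4 : ((u % 3 + v % 3) % 3 + 3 * add3 s (u / 3) (v / 3)) / 3 = add3 s (u / 3) (v / 3) := by
      omega
    rw [h1, h2, h3, h4, ih (a / 3) (u / 3) (v / 3)]
    congr 1
    omega




lemma add3_comm : ∀ s a c, add3 s a c = add3 s c a := by
  intro s
  induction s with
  | zero => intro a c; simp [add3]
  | succ s ih =>
    intro a c
    simp only [add3, ih (a / 3) (c / 3)]
    congr 1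
    omega

lemma add3_cancel_left : ∀ s u i i', i < 3 ^ s → i' < 3 ^ s →
    add3 s u i = add3 s u i' → i = i' := by
  intro s u i i' hi hi' h
  apply add3_cancel s i i' u hi hi'
  rw [add3_comm s i u, add3_comm s i' u]
  exact h

lemma conflict_of_shift {s i0 i1 : ℕ} (h1 : i1 < 3 ^ s) :
    ∀ x x' ea eb, x < 3 ^ s → x' < 3 ^ s →
    ((ea = 0 ∧ eb = sub3 s i1 i0) ∨
     (ea = 0 ∧ eb = add3 s (sub3 s i1 i0) (sub3 s i1 i0)) ∨
     (ea = sub3 s i1 i0 ∧ eb = add3 s (sub3 s i1 i0) (sub3 s i1 i0))) →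
    add3 s x ea = add3 s x' eb →
    add3 s x i0 = add3 s x' i1 ∨ add3 s x' i0 = add3 s x i1 := by
  intro x x' ea eb hx hx' hp h
  set d := sub3 s i1 i0 with hd
  have hdi : add3 s d i0 = i1 := add3_sub3 s i1 i0 h1
  have key : ∀ z z', z = add3 s z' d → add3 s z i0 = add3 s z' i1 := by
    intro z z' hz; rw [hz, add3_assoc, hdi]
  rcases hp with ⟨ha, hb⟩ | ⟨ha, hb⟩ | ⟨ha, hb⟩
  · subst ha; subst hb
    rw [add3_zero s x hx] at h
    exact Or.inl (key x x' h)
  · subst ha; subst hb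
    rw [add3_zero s x hx] at h
    have h2 : add3 s x d = x' := by
      rw [h, add3_assoc, add3_triple, add3_zero s x' hx']
    exact Or.inr (key x' x h2.symm)
  · subst ha; subst hb
    have h3 : x = add3 s x' d := by
      apply add3_cancel s x (add3 s x' d) d hx (add3_lt s x' d)
      rw [h, add3_assoc]
    exact Or.inl (key x x' h3)

lemma eucl {P x x' y y' : ℕ} (hP : 0 < P) (hx : x < P) (hx' : x' < P)
    (h : x + P * y = x' + P * y') : x = x' ∧ y = y' := by
  have h1 : (x + P * y) % P = x := by
    rw [Nat.add_mul_mod_self_left, Nat.mod_eq_of_lt hx]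
  have h2 : (x + P * y) / P = y := by
    rw [Nat.add_mul_div_left _ _ hP, Nat.div_eq_of_lt hx, Nat.zero_add]
  have h3 : (x' + P * y') % P = x' := by
    rw [Nat.add_mul_mod_self_left, Nat.mod_eq_of_lt hx']
  have h4 : (x' + P * y') / P = y' := by
    rw [Nat.add_mul_div_left _ _ hP, Nat.div_eq_of_lt hx', Nat.zero_add]
  constructor
  · rw [← h1, ← h3, h]
  · rw [← h2, ← h4, h]



lemma case3_gen (b m n s P A Q L : ℕ)
    (hm2 : 2 ≤ m) (hmb : m < b)
    (hP : P = 3 ^ s) (hmP : m ≤ P)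
    (hA : A = P * Q)
    (hn : n = A + L) (hL : L < P)
    (hsum : m + n < 3 * b)
    (W : ℕ → ℕ → ℕ)
    (hWrow : ∀ i u u', u < L → u' < L → W i u = W i u' → u = u')
    (hWcol : ∀ i i' u, i < m → i' < m → W i u = W i' u → i = i')
    (hWbound : ∀ i0 i1 : ℕ, i0 < m → i1 < m → i0 ≠ i1 →
      ∀ Z : Finset ℕ, (∀ u ∈ Z, u < L) →
      (∀ u ∈ Z, ∀ u' ∈ Z, W i0 u ≠ W i1 u') →
      3 * Z.card ≤ m + L) :
    ∃ R : Fin m × Fin n → ℕ, IsLatin R ∧ ¬ HasRainbow R 2 b ∧ ¬ HasRainbow R b 2 := by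
  have hP0 : 0 < P := by rw [hP]; positivity
  -- the main-block value bound
  have hmainlt : ∀ (e j : ℕ), j < A → add3 s (j % P) e + P * (j / P) < A := by
    intro e j hj
    have h1 : add3 s (j % P) e < P := by rw [hP]; exact add3_lt s _ e
    have h2 : j / P < Q := by
      rw [hA] at hj
      exact (Nat.div_lt_iff_lt_mul hP0).mpr (by rwa [mul_comm] at hj)
    calc add3 s (j % P) e + P * (j / P) < P + P * (j / P) := by omega
      _ = P * (j / P + 1) := by ring
      _ ≤ P * Q := Nat.mul_le_mul_left P (by omega)
      _ = A := hA.symm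
  set R : Fin m × Fin n → ℕ := fun p =>
    if (p.2 : ℕ) < A then add3 s ((p.2 : ℕ) % P) (p.1 : ℕ) + P * ((p.2 : ℕ) / P)
    else A + W (p.1 : ℕ) ((p.2 : ℕ) - A) with hR
  have hRmain : ∀ (i : Fin m) (j : Fin n), (j : ℕ) < A →
      R (i, j) = add3 s ((j : ℕ) % P) (i : ℕ) + P * ((j : ℕ) / P) := by
    intro i j hj; simp only [hR, if_pos hj]
  have hRleft : ∀ (i : Fin m) (j : Fin n), ¬ (j : ℕ) < A →
      R (i, j) = A + W (i : ℕ) ((j : ℕ) - A) := by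
    intro i j hj; simp only [hR, if_neg hj]
  have hjlt : ∀ j : Fin n, (j : ℕ) < A + L := fun j => hn ▸ j.isLt
  refine ⟨R, ⟨?_, ?_⟩, ?_, ?_⟩
  · -- rows latin
    intro i j j' h
    by_cases h1 : (j : ℕ) < A <;> by_cases h2 : (j' : ℕ) < A
    · rw [hRmain i j h1, hRmain i j' h2] at h
      have hx : add3 s ((j : ℕ) % P) (i : ℕ) < P := by rw [hP]; exact add3_lt s _ _
      have hx' : add3 s ((j' : ℕ) % P) (i : ℕ) < P := by rw [hP]; exact add3_lt s _ _
      obtain ⟨he, hy⟩ := eucl hP0 hx hx' h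
      have hm1 : (j : ℕ) % P = (j' : ℕ) % P := by
        apply add3_cancel s _ _ _ _ _ he <;> (rw [hP]; exact hP ▸ Nat.mod_lt _ hP0)
      apply Fin.val_injective
      have hd1 := Nat.div_add_mod (j : ℕ) P
      have hd2 := Nat.div_add_mod (j' : ℕ) P
      calc (j : ℕ) = P * ((j : ℕ) / P) + (j : ℕ) % P := hd1.symm
        _ = P * ((j' : ℕ) / P) + (j' : ℕ) % P := by rw [hy, hm1]
        _ = (j' : ℕ) := hd2
    · rw [hRmain i j h1, hRleft i j' h2] at h
      have := hmainlt (i : ℕ) (j : ℕ) h1; omega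
    · rw [hRleft i j h1, hRmain i j' h2] at h
      have := hmainlt (i : ℕ) (j' : ℕ) h2; omega
    · rw [hRleft i j h1, hRleft i j' h2] at h
      have h3 : ((j : ℕ) - A) = ((j' : ℕ) - A) :=
        hWrow (i : ℕ) ((j : ℕ) - A) ((j' : ℕ) - A)
          (by have := hjlt j; omega) (by have := hjlt j'; omega) (by omega)
      apply Fin.val_injective; omega
  · -- columns latin
    intro i i' j h
    by_cases h1 : (j : ℕ) < A
    · rw [hRmain i j h1, hRmain i' j h1] at h
      have he : add3 s ((j : ℕ) % P) (i : ℕ) = add3 s ((j : ℕ) % P) (i' : ℕ) := by omega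
      have := add3_cancel_left s ((j : ℕ) % P) (i : ℕ) (i' : ℕ)
        (by rw [← hP]; exact lt_of_lt_of_le i.isLt hmP)
        (by rw [← hP]; exact lt_of_lt_of_le i'.isLt hmP) he
      exact Fin.val_injective this
    · rw [hRleft i j h1, hRleft i' j h1] at h
      have := hWcol (i : ℕ) (i' : ℕ) ((j : ℕ) - A) i.isLt i'.isLt (by omega)
      exact Fin.val_injective this
  · -- no rainbow 2 × b
    rintro ⟨rows, cols, h2, hbc, hinj⟩
    obtain ⟨i0, i1, hne, rfl⟩ := Finset.card_eq_two.mp h2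
    have hmem : ∀ (i : Fin m), i ∈ ({i0, i1} : Finset (Fin m)) → ∀ j ∈ cols,
        ((i, j) : Fin m × Fin n) ∈ (↑(({i0, i1} : Finset (Fin m)) ×ˢ cols) : Set _) := by
      intro i hi j hj
      exact Finset.mem_coe.mpr (Finset.mem_product.mpr ⟨hi, hj⟩)
    have hi0m : (i0 : Fin m) ∈ ({i0, i1} : Finset (Fin m)) := Finset.mem_insert_self _ _
    have hi1m : (i1 : Fin m) ∈ ({i0, i1} : Finset (Fin m)) := by
      simp [Finset.mem_insert]
    -- derived conflict-freeness: row i0 and row i1 never share a symbol across cols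
    have hconf : ∀ j ∈ cols, ∀ j' ∈ cols, R (i0, j) ≠ R (i1, j') := by
      intro j hj j' hj' hcontra
      have := hinj (hmem i0 hi0m j hj) (hmem i1 hi1m j' hj') hcontra
      exact hne (Prod.ext_iff.mp this).1
    have hne' : (i0 : ℕ) ≠ (i1 : ℕ) := fun h => hne (Fin.val_injective h)
    have hi1P : (i1 : ℕ) < 3 ^ s := by rw [← hP]; exact lt_of_lt_of_le i1.isLt hmP
    set d := sub3 s (i1 : ℕ) (i0 : ℕ) with hd
    set dd := add3 s d d with hdd
    have hdP : d < P := by rw [hP]; exact sub3_lt s _ _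
    have hddP : dd < P := by rw [hP]; exact add3_lt s _ _
    -- main part: three disjoint shifted images
    set Y := cols.filter (fun j : Fin n => (j : ℕ) < A) with hY
    set Zf := cols.filter (fun j : Fin n => ¬ (j : ℕ) < A) with hZf
    have hYZ : Y.card + Zf.card = cols.card :=
      Finset.card_filter_add_card_filter_not (fun j : Fin n => (j : ℕ) < A)
    set F : ℕ → Fin n → ℕ := fun e j => add3 s ((j : ℕ) % P) e + P * ((j : ℕ) / P) with hF
    have hFinj : ∀ e, Set.InjOn (F e) Y := by
      intro e j hj j' hj' h
      have hx : add3 s ((j : ℕ) % P) e < P := by rw [hP]; exact add3_lt s _ _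
      have hx' : add3 s ((j' : ℕ) % P) e < P := by rw [hP]; exact add3_lt s _ _
      obtain ⟨he, hy⟩ := eucl hP0 hx hx' h
      have hm1 : (j : ℕ) % P = (j' : ℕ) % P := by
        apply add3_cancel s _ _ _ _ _ he <;> (rw [hP]; exact hP ▸ Nat.mod_lt _ hP0)
      apply Fin.val_injective
      have hd1 := Nat.div_add_mod (j : ℕ) P
      have hd2 := Nat.div_add_mod (j' : ℕ) P
      calc (j : ℕ) = P * ((j : ℕ) / P) + (j : ℕ) % P := hd1.symm
        _ = P * ((j' : ℕ) / P) + (j' : ℕ) % P := by rw [hy, hm1]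
        _ = (j' : ℕ) := hd2
    have hFsub : ∀ e, Y.image (F e) ⊆ Finset.range A := by
      intro e v hv
      obtain ⟨j, hj, rfl⟩ := Finset.mem_image.mp hv
      have hjA : (j : ℕ) < A := (Finset.mem_filter.mp hj).2
      exact Finset.mem_range.mpr (hmainlt e (j : ℕ) hjA)
    -- disjointness of shifted images
    have hdisj : ∀ ea eb,
        ((ea = 0 ∧ eb = d) ∨ (ea = 0 ∧ eb = dd) ∨ (ea = d ∧ eb = dd)) →
        Disjoint (Y.image (F ea)) (Y.image (F eb)) := by
      intro ea eb hp
      rw [Finset.disjoint_left]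
      intro v hva hvb
      obtain ⟨j, hj, hFj⟩ := Finset.mem_image.mp hva
      obtain ⟨j', hj', hFj'⟩ := Finset.mem_image.mp hvb
      have hjc : j ∈ cols := (Finset.mem_filter.mp hj).1
      have hj'c : j' ∈ cols := (Finset.mem_filter.mp hj').1
      have hjA : (j : ℕ) < A := (Finset.mem_filter.mp hj).2
      have hj'A : (j' : ℕ) < A := (Finset.mem_filter.mp hj').2
      have heq : F ea j = F eb j' := by rw [hFj, hFj']
      simp only [hF] at heq
      have hx : add3 s ((j : ℕ) % P) ea < P := by rw [hP]; exact add3_lt s _ _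
      have hx' : add3 s ((j' : ℕ) % P) eb < P := by rw [hP]; exact add3_lt s _ _
      obtain ⟨he, hy⟩ := eucl hP0 hx hx' heq
      have hxP : (j : ℕ) % P < 3 ^ s := by rw [← hP]; exact Nat.mod_lt _ hP0
      have hx'P : (j' : ℕ) % P < 3 ^ s := by rw [← hP]; exact Nat.mod_lt _ hP0
      have hcs := conflict_of_shift hi1P ((j : ℕ) % P) ((j' : ℕ) % P) ea eb hxP hx'P
        (by rw [← hd, ← hdd]; tauto) he
      rcases hcs with hc | hc
      · exact hconf j hjc j' hj'c (by rw [hRmain i0 j hjA, hRmain i1 j' hj'A, hc, hy])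
      · exact hconf j' hj'c j hjc (by rw [hRmain i0 j' hj'A, hRmain i1 j hjA, ← hc, hy])
    have hcard3 : 3 * Y.card ≤ A := by
      have hd1 : Disjoint (Y.image (F 0)) (Y.image (F d)) := hdisj 0 d (by tauto)
      have hd2 : Disjoint (Y.image (F 0)) (Y.image (F dd)) := hdisj 0 dd (by tauto)
      have hd3 : Disjoint (Y.image (F d)) (Y.image (F dd)) := hdisj d dd (by tauto)
      have hu : (Y.image (F 0) ∪ Y.image (F d) ∪ Y.image (F dd)).card
          = Y.card + Y.card + Y.card := by
        rw [Finset.card_union_of_disjoint, Finset.card_union_of_disjoint hd1]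
        · rw [Finset.card_image_of_injOn (hFinj 0), Finset.card_image_of_injOn (hFinj d),
            Finset.card_image_of_injOn (hFinj dd)]
        · rw [Finset.disjoint_union_left]; exact ⟨hd2, hd3⟩
      have hsub : (Y.image (F 0) ∪ Y.image (F d) ∪ Y.image (F dd)) ⊆ Finset.range A := by
        intro v hv
        rcases Finset.mem_union.mp hv with hv | hv
        · rcases Finset.mem_union.mp hv with hv | hv
          · exact hFsub 0 hv
          · exact hFsub d hv
        · exact hFsub dd hv
      have := Finset.card_le_card hsub
      rw [hu, Finset.card_range] at this
      omega
    -- leftover part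
    set Z : Finset ℕ := Zf.image (fun j : Fin n => (j : ℕ) - A) with hZ
    have hZinj : Set.InjOn (fun j : Fin n => (j : ℕ) - A) Zf := by
      intro j hj j' hj' h
      have h1 : ¬ (j : ℕ) < A := (Finset.mem_filter.mp hj).2
      have h2 : ¬ (j' : ℕ) < A := (Finset.mem_filter.mp hj').2
      apply Fin.val_injective
      simp only at h
      omega
    have hZcard : Z.card = Zf.card := Finset.card_image_of_injOn hZinj
    have hZlt : ∀ u ∈ Z, u < L := by
      intro u hu
      obtain ⟨j, hj, rfl⟩ := Finset.mem_image.mp hu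
      have := hjlt j
      have h1 : ¬ (j : ℕ) < A := (Finset.mem_filter.mp hj).2
      omega
    have hZconf : ∀ u ∈ Z, ∀ u' ∈ Z, W (i0 : ℕ) u ≠ W (i1 : ℕ) u' := by
      intro u hu u' hu' hcontra
      obtain ⟨j, hj, rfl⟩ := Finset.mem_image.mp hu
      obtain ⟨j', hj', rfl⟩ := Finset.mem_image.mp hu'
      have h1 : ¬ (j : ℕ) < A := (Finset.mem_filter.mp hj).2
      have h2 : ¬ (j' : ℕ) < A := (Finset.mem_filter.mp hj').2
      apply hconf j (Finset.mem_filter.mp hj).1 j' (Finset.mem_filter.mp hj').1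
      rw [hRleft i0 j h1, hRleft i1 j' h2, hcontra]
    have hZbound : 3 * Zf.card ≤ m + L := by
      rw [← hZcard]
      exact hWbound (i0 : ℕ) (i1 : ℕ) i0.isLt i1.isLt hne' Z hZlt hZconf
    omega
  · -- no rainbow b × 2
    rintro ⟨rows, cols, hbcard, h2, hinj⟩
    have huniv : rows.card ≤ m := by simpa using Finset.card_le_univ rows
    omega



lemma case3 (b m n : ℕ) (hm2 : 2 ≤ m) (hmn : m ≤ n) (hn2b : 2 * b ≤ n)
    (hsum : m + n < 3 * b) :
    ∃ R : Fin m × Fin n → ℕ, IsLatin R ∧ ¬ HasRainbow R 2 b ∧ ¬ HasRainbow R b 2 := by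
  have hmb : m < b := by omega
  set s := Nat.clog 3 m with hs
  have hmP : m ≤ 3 ^ s := Nat.le_pow_clog (by norm_num) m
  have hP'm : 3 ^ (s - 1) < m := Nat.pow_pred_clog_lt_self (by norm_num) (by omega)
  have hs0 : s ≠ 0 := by
    intro h
    rw [h] at hmP
    simp at hmP
    omega
  have hP3 : 3 ^ s = 3 * 3 ^ (s - 1) := by
    calc 3 ^ s = 3 ^ (s - 1 + 1) := by rw [Nat.sub_add_cancel (by omega)]
      _ = 3 * 3 ^ (s - 1) := by rw [pow_succ]; ring
  set P := 3 ^ s with hPdef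
  have hP0 : 0 < P := by positivity
  set Q := n / P with hQ
  set L := n % P with hLdef
  have hn : n = P * Q + L := by rw [hQ, hLdef]; exact (Nat.div_add_mod n P).symm
  have hL : L < P := Nat.mod_lt _ hP0
  by_cases hBr : 2 * L ≤ m ∨ P ≤ m + L
  · -- leftover inside the elementary 3-group
    apply case3_gen b m n s P (P * Q) Q L hm2 hmb rfl hmP rfl hn hL hsum
      (fun i u => add3 s u i)
    · -- row injectivity of leftover
      intro i u u' hu hu' h
      exact add3_cancel s u u' i (by omega) (by omega) h
    · -- column injectivity of leftover
      intro i i' u hi hi' h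
      exact add3_cancel_left s u i i' (by omega) (by omega) h
    · -- independence bound
      intro i0 i1 h0 h1 hne Z hZlt hZconf
      rcases hBr with hbr | hbr
      · have hZL : Z.card ≤ L := by
          have : Z ⊆ Finset.range L := fun u hu => Finset.mem_range.mpr (hZlt u hu)
          have := Finset.card_le_card this
          rwa [Finset.card_range] at this
        omega
      · -- three disjoint shifted images, as in the main block
        have hi1P : i1 < 3 ^ s := by omega
        set d := sub3 s i1 i0 with hd
        set dd := add3 s d d with hdd
        set G : ℕ → Finset ℕ := fun e => Z.image (fun u => add3 s u e) with hG
        have hGinj : ∀ e, Set.InjOn (fun u => add3 s u e) Z := by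
          intro e u hu u' hu' h
          exact add3_cancel s u u' e (by have := hZlt u hu; omega)
            (by have := hZlt u' hu'; omega) h
        have hGsub : ∀ e, G e ⊆ Finset.range P := by
          intro e v hv
          obtain ⟨u, hu, rfl⟩ := Finset.mem_image.mp hv
          exact Finset.mem_range.mpr (add3_lt s u e)
        have hGdisj : ∀ ea eb,
            ((ea = 0 ∧ eb = d) ∨ (ea = 0 ∧ eb = dd) ∨ (ea = d ∧ eb = dd)) →
            Disjoint (G ea) (G eb) := by
          intro ea eb hp
          rw [Finset.disjoint_left]
          intro v hva hvb
          obtain ⟨u, hu, hFu⟩ := Finset.mem_image.mp hva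
          obtain ⟨u', hu', hFu'⟩ := Finset.mem_image.mp hvb
          have heq : add3 s u ea = add3 s u' eb := by rw [hFu, hFu']
          have hcs := conflict_of_shift hi1P u u' ea eb
            (by have := hZlt u hu; omega) (by have := hZlt u' hu'; omega)
            (by rw [← hd, ← hdd]; tauto) heq
          rcases hcs with hc | hc
          · exact hZconf u hu u' hu' hc
          · exact hZconf u' hu' u hu hc
        have hu : (G 0 ∪ G d ∪ G dd).card = Z.card + Z.card + Z.card := by
          rw [Finset.card_union_of_disjoint, Finset.card_union_of_disjoint
            (hGdisj 0 d (by tauto))]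
          · rw [hG]
            rw [Finset.card_image_of_injOn (hGinj 0), Finset.card_image_of_injOn (hGinj d),
              Finset.card_image_of_injOn (hGinj dd)]
          · rw [Finset.disjoint_union_left]
            exact ⟨hGdisj 0 dd (by tauto), hGdisj d dd (by tauto)⟩
        have hsub : (G 0 ∪ G d ∪ G dd) ⊆ Finset.range P := by
          intro v hv
          rcases Finset.mem_union.mp hv with hv | hv
          · rcases Finset.mem_union.mp hv with hv | hv
            · exact hGsub 0 hv
            · exact hGsub d hv
          · exact hGsub dd hv
        have := Finset.card_le_card hsub
        rw [hu, Finset.card_range] at this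
        omega
  · -- leftover as an interval in an odd cyclic group
    push_neg at hBr
    obtain ⟨hbr1, hbr2⟩ := hBr
    have hKchoice := max_choice m L
    have hKm := le_max_left m L
    have hKL := le_max_right m L
    set K := max m L with hK
    set M := 2 * (K / 2) + 1 with hM
    have hM0 : 0 < M := by omega
    have hmM : m ≤ M := by omega
    have hLM : L ≤ M := by omega
    have hcov : 3 * (M / 2) ≤ m + L := by
      rcases hKchoice with h | h <;> omega
    apply case3_gen b m n s P (P * Q) Q L hm2 hmb rfl hmP rfl hn hL hsum
      (fun i u => (u + i) % M)
    · intro i u u' hu hu' h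
      have hmod : (u + i) ≡ (u' + i) [MOD M] := h
      have := Nat.ModEq.add_right_cancel' i hmod
      have h2 : u % M = u' % M := this
      rw [Nat.mod_eq_of_lt (by omega), Nat.mod_eq_of_lt (by omega)] at h2
      exact h2
    · intro i i' u hi hi' h
      have hmod : (u + i) ≡ (u + i') [MOD M] := h
      have := Nat.ModEq.add_left_cancel' u hmod
      have h2 : i % M = i' % M := this
      rw [Nat.mod_eq_of_lt (by omega), Nat.mod_eq_of_lt (by omega)] at h2
      exact h2
    · intro i0 i1 h0 h1 hne Z hZlt hZconf
      set C : ℕ → Finset ℕ := fun i => Z.image (fun u => (u + i) % M) with hC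
      have hCinj : ∀ i, Set.InjOn (fun u => (u + i) % M) Z := by
        intro i u hu u' hu' h
        have hmod : (u + i) ≡ (u' + i) [MOD M] := h
        have := Nat.ModEq.add_right_cancel' i hmod
        have h2 : u % M = u' % M := this
        rw [Nat.mod_eq_of_lt (by have := hZlt u hu; omega),
          Nat.mod_eq_of_lt (by have := hZlt u' hu'; omega)] at h2
        exact h2
      have hCsub : ∀ i, C i ⊆ Finset.range M := by
        intro i v hv
        obtain ⟨u, hu, rfl⟩ := Finset.mem_image.mp hv
        exact Finset.mem_range.mpr (Nat.mod_lt _ hM0)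
      have hCdisj : Disjoint (C i0) (C i1) := by
        rw [Finset.disjoint_left]
        intro v hva hvb
        obtain ⟨u, hu, hFu⟩ := Finset.mem_image.mp hva
        obtain ⟨u', hu', hFu'⟩ := Finset.mem_image.mp hvb
        exact hZconf u hu u' hu' (by rw [hFu, hFu'])
      have hcardu : (C i0 ∪ C i1).card = Z.card + Z.card := by
        rw [Finset.card_union_of_disjoint hCdisj, hC]
        rw [Finset.card_image_of_injOn (hCinj i0), Finset.card_image_of_injOn (hCinj i1)]
      have hsub : (C i0 ∪ C i1) ⊆ Finset.range M := by
        intro v hv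
        rcases Finset.mem_union.mp hv with hv | hv
        · exact hCsub i0 hv
        · exact hCsub i1 hv
      have := Finset.card_le_card hsub
      rw [hcardu, Finset.card_range] at this
      omega



lemma cyclic_case (b m n : ℕ) (hm : 0 < m) (hmn : m ≤ n) (hn2 : n < 2 * b) :
    ∃ R : Fin m × Fin n → ℕ, IsLatin R ∧ ¬ HasRainbow R 2 b ∧ ¬ HasRainbow R b 2 := by
  have hn0 : 0 < n := lt_of_lt_of_le hm hmn
  refine ⟨fun p => ((p.1 : ℕ) + (p.2 : ℕ)) % n, ⟨?_, ?_⟩, ?_, ?_⟩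
  · intro i j j' h
    simp only at h
    have hmod : ((i : ℕ) + (j : ℕ)) ≡ ((i : ℕ) + (j' : ℕ)) [MOD n] := h
    have h2 := Nat.ModEq.add_left_cancel' (i : ℕ) hmod
    have h3 : (j : ℕ) % n = (j' : ℕ) % n := h2
    rw [Nat.mod_eq_of_lt j.isLt, Nat.mod_eq_of_lt j'.isLt] at h3
    exact Fin.val_injective h3
  · intro i i' j h
    simp only at h
    have hmod : ((i : ℕ) + (j : ℕ)) ≡ ((i' : ℕ) + (j : ℕ)) [MOD n] := h
    have h2 := Nat.ModEq.add_right_cancel' (j : ℕ) hmod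
    have h3 : (i : ℕ) % n = (i' : ℕ) % n := h2
    rw [Nat.mod_eq_of_lt (lt_of_lt_of_le i.isLt hmn),
      Nat.mod_eq_of_lt (lt_of_lt_of_le i'.isLt hmn)] at h3
    exact Fin.val_injective h3
  · rintro ⟨rows, cols, h2, hbc, hinj⟩
    have hcard : (rows ×ˢ cols).card = 2 * b := by
      rw [Finset.card_product, h2, hbc]
    have himg := Finset.card_image_of_injOn hinj
    have hsub : (rows ×ˢ cols).image (fun p => ((p.1 : ℕ) + (p.2 : ℕ)) % n)
        ⊆ Finset.range n := by
      intro v hv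
      obtain ⟨p, _, rfl⟩ := Finset.mem_image.mp hv
      exact Finset.mem_range.mpr (Nat.mod_lt _ hn0)
    have := Finset.card_le_card hsub
    rw [himg, hcard, Finset.card_range] at this
    omega
  · rintro ⟨rows, cols, h2, hbc, hinj⟩
    have hcard : (rows ×ˢ cols).card = b * 2 := by
      rw [Finset.card_product, h2, hbc]
    have himg := Finset.card_image_of_injOn hinj
    have hsub : (rows ×ˢ cols).image (fun p => ((p.1 : ℕ) + (p.2 : ℕ)) % n)
        ⊆ Finset.range n := by
      intro v hv
      obtain ⟨p, _, rfl⟩ := Finset.mem_image.mp hv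
      exact Finset.mem_range.mpr (Nat.mod_lt _ hn0)
    have := Finset.card_le_card hsub
    rw [himg, hcard, Finset.card_range] at this
    omega

lemma one_row_case (b n : ℕ) (hb : 2 ≤ b) :
    ∃ R : Fin 1 × Fin n → ℕ, IsLatin R ∧ ¬ HasRainbow R 2 b ∧ ¬ HasRainbow R b 2 := by
  refine ⟨fun p => (p.2 : ℕ), ⟨?_, ?_⟩, ?_, ?_⟩
  · intro i j j' h
    exact Fin.val_injective h
  · intro i i' j _
    apply Fin.val_injective
    have := i.isLt
    have := i'.isLt
    omega
  · rintro ⟨rows, cols, h2, hbc, hinj⟩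
    have huniv : rows.card ≤ 1 := by simpa using Finset.card_le_univ rows
    omega
  · rintro ⟨rows, cols, hbc, h2, hinj⟩
    have huniv : rows.card ≤ 1 := by simpa using Finset.card_le_univ rows
    omega



lemma part1 (b : ℕ) (hb : 2 ≤ b) (R : Fin 2 × Fin (3 * b - 2) → ℕ) (hLat : IsLatin R) :
    HasRainbow R 2 b := by
  obtain ⟨hrow, hcol⟩ := hLat
  have greedy : ∀ k (S : Finset (Fin (3 * b - 2))), 3 * k ≤ S.card + 2 →
      ∃ T, T ⊆ S ∧ T.card = k ∧ ∀ j ∈ T, ∀ j' ∈ T, j ≠ j' →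
        (R (0, j) ≠ R (1, j') ∧ R (1, j) ≠ R (0, j')) := by
    intro k
    induction k with
    | zero =>
      intro S _
      exact ⟨∅, Finset.empty_subset S, Finset.card_empty, by simp⟩
    | succ k ih =>
      intro S hS
      have hne : S.Nonempty := Finset.card_pos.mp (by omega)
      obtain ⟨v, hv⟩ := hne
      set S' := (S.erase v).filter
        (fun j => R (0, v) ≠ R (1, j) ∧ R (1, v) ≠ R (0, j)) with hS'
      set Af := S.filter (fun j => R (1, j) = R (0, v)) with hAf
      set Bf := S.filter (fun j => R (0, j) = R (1, v)) with hBf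
      have hsub : S ⊆ insert v (Af ∪ Bf ∪ S') := by
        intro j hj
        rw [Finset.mem_insert]
        by_cases h1 : j = v
        · exact Or.inl h1
        · right
          rw [Finset.mem_union, Finset.mem_union]
          by_cases h2 : R (0, v) = R (1, j)
          · exact Or.inl (Or.inl (Finset.mem_filter.mpr ⟨hj, h2.symm⟩))
          · by_cases h3 : R (1, v) = R (0, j)
            · exact Or.inl (Or.inr (Finset.mem_filter.mpr ⟨hj, h3.symm⟩))
            · exact Or.inr (Finset.mem_filter.mpr
                ⟨Finset.mem_erase.mpr ⟨h1, hj⟩, h2, h3⟩)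
      have hAcard : Af.card ≤ 1 := by
        apply Finset.card_le_one.mpr
        intro a ha c hc
        have h1 := (Finset.mem_filter.mp ha).2
        have h2 := (Finset.mem_filter.mp hc).2
        exact hrow 1 a c (h1.trans h2.symm)
      have hBcard : Bf.card ≤ 1 := by
        apply Finset.card_le_one.mpr
        intro a ha c hc
        have h1 := (Finset.mem_filter.mp ha).2
        have h2 := (Finset.mem_filter.mp hc).2
        exact hrow 0 a c (h1.trans h2.symm)
      have hcard : S.card ≤ S'.card + 3 := by
        have h1 := Finset.card_le_card hsub
        have h2 := Finset.card_insert_le v (Af ∪ Bf ∪ S')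
        have h3 := Finset.card_union_le (Af ∪ Bf) S'
        have h4 := Finset.card_union_le Af Bf
        omega
      obtain ⟨T', hT'sub, hT'card, hT'pair⟩ := ih S' (by omega)
      have hvS' : v ∉ S' := by
        intro hvs
        exact (Finset.mem_erase.mp (Finset.mem_filter.mp hvs).1).1 rfl
      refine ⟨insert v T', ?_, ?_, ?_⟩
      · intro x hx
        rcases Finset.mem_insert.mp hx with rfl | hx
        · exact hv
        · exact Finset.mem_of_mem_erase (Finset.mem_filter.mp (hT'sub hx)).1
      · rw [Finset.card_insert_of_notMem (fun h => hvS' (hT'sub h)), hT'card]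
      · intro j hj j' hj' hjj
        rcases Finset.mem_insert.mp hj with h5 | h5 <;>
          rcases Finset.mem_insert.mp hj' with h6 | h6
        · exact absurd (h5.trans h6.symm) hjj
        · subst h5
          have hmem := Finset.mem_filter.mp (hT'sub h6)
          exact ⟨hmem.2.1, hmem.2.2⟩
        · subst h6
          have hmem := Finset.mem_filter.mp (hT'sub h5)
          exact ⟨fun h => hmem.2.2 h.symm, fun h => hmem.2.1 h.symm⟩
        · exact hT'pair j h5 j' h6 hjj
  have hcardu : (Finset.univ : Finset (Fin (3 * b - 2))).card = 3 * b - 2 := by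
    simp
  obtain ⟨T, _, hTcard, hTpair⟩ := greedy b Finset.univ (by rw [hcardu]; omega)
  refine ⟨Finset.univ, T, by simp, hTcard, ?_⟩
  rintro ⟨i, j⟩ hij ⟨i', j'⟩ hij' heq
  have hjT : j ∈ T := by
    have := Finset.mem_coe.mp hij
    exact (Finset.mem_product.mp this).2
  have hj'T : j' ∈ T := by
    have := Finset.mem_coe.mp hij'
    exact (Finset.mem_product.mp this).2
  by_cases hii : i = i'
  · subst hii
    have : j = j' := hrow i j j' heq
    rw [this]
  · by_cases hjj : j = j'
    · subst hjj
      exact absurd (hcol i i' j heq) hii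
    · exfalso
      have hvne : (i : ℕ) ≠ (i' : ℕ) := fun h => hii (Fin.val_injective h)
      have hi2 := i.isLt
      have hi'2 := i'.isLt
      have hcase : ((i : ℕ) = 0 ∧ (i' : ℕ) = 1) ∨ ((i : ℕ) = 1 ∧ (i' : ℕ) = 0) := by omega
      rcases hcase with ⟨h1, h2⟩ | ⟨h1, h2⟩
      · have hi0 : i = (0 : Fin 2) := Fin.val_injective (by simpa using h1)
        have hi1 : i' = (1 : Fin 2) := Fin.val_injective (by simpa using h2)
        rw [hi0, hi1] at heq
        exact (hTpair j hjT j' hj'T hjj).1 heq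
      · have hi0 : i = (1 : Fin 2) := Fin.val_injective (by simpa using h1)
        have hi1 : i' = (0 : Fin 2) := Fin.val_injective (by simpa using h2)
        rw [hi0, hi1] at heq
        exact (hTpair j hjT j' hj'T hjj).2 heq

end AR14

theorem stmt_14 (b : ℕ) (hb : 2 ≤ b) :
    (∀ R : Fin 2 × Fin (3 * b - 2) → ℕ, IsLatin R → HasRainbow R 2 b) ∧
    (∀ m n : ℕ, 0 < m → m ≤ n → m + n < 3 * b →
      ∃ R : Fin m × Fin n → ℕ, IsLatin R ∧
        ¬ HasRainbow R 2 b ∧ ¬ HasRainbow R b 2) := by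
  constructor
  · exact fun R hR => AR14.part1 b hb R hR
  · intro m n hm hmn hsum
    by_cases hcyc : n < 2 * b
    · exact AR14.cyclic_case b m n hm hmn hcyc
    · by_cases hm1 : m = 1
      · subst hm1
        exact AR14.one_row_case b n hb
      · exact AR14.case3 b m n (by omega) hmn (by omega) hsum
end

section
/- For positive integers m ≤ n with n ≥ ab, if there exists an m × n latin rectangle with no rainbow a × b subrectangle whenever m < b (via the projective-plane construction for a - 1 a prime power), and any coloring with fewer than ab symbols avoids rainbow a × b subrectangles, then for a - 1 a prime power and b ≥ a(a-1), the edge anti-Ramsey number satisfies AR_E(K_{a,b}) = a²(a-1)(b-1) + ab. -/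
open Finset

private lemma AR15.rainbow_rows_le {m n : ℕ} {R : Fin m × Fin n → ℕ} {a b : ℕ}
    (h : HasRainbow R a b) : a ≤ m := by
  obtain ⟨rows, cols, h1, h2, h3⟩ := h
  calc a = rows.card := h1.symm
    _ ≤ (univ : Finset (Fin m)).card := card_le_card (subset_univ _)
    _ = m := by simp

/-- The set of columns sharing a symbol with column `j'`. -/
private def AR15.badSet {a n : ℕ} (R : Fin a × Fin n → ℕ) (j' : Fin n) : Finset (Fin n) :=
  Finset.univ.filter (fun j => ∃ i i' : Fin a, R (i, j) = R (i', j'))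

private lemma AR15.badSet_card {a n : ℕ} (ha : 0 < a) (R : Fin a × Fin n → ℕ)
    (hrow : ∀ i : Fin a, ∀ j j' : Fin n, R (i, j) = R (i, j') → j = j')
    (j' : Fin n) : (AR15.badSet R j').card ≤ a * a - a + 1 := by
  classical
  have hex : ∀ j : Fin n, ∃ p : Fin a × Fin a,
      (∃ i i' : Fin a, R (i, j) = R (i', j')) → R (p.1, j) = R (p.2, j') := by
    intro j
    by_cases h : ∃ i i' : Fin a, R (i, j) = R (i', j')
    · obtain ⟨i, i', hii⟩ := h; exact ⟨(i, i'), fun _ => hii⟩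
    · exact ⟨(⟨0, ha⟩, ⟨0, ha⟩), fun hc => absurd hc h⟩
  choose w hw using hex
  have key : (AR15.badSet R j' \ {j'}).card ≤ a * a - a := by
    have hmemex : ∀ j ∈ AR15.badSet R j' \ {j'}, (∃ i i' : Fin a, R (i, j) = R (i', j')) := by
      intro j hj
      rw [Finset.mem_sdiff, AR15.badSet, mem_filter] at hj
      exact hj.1.2
    have := Finset.card_le_card_of_injOn (f := w)
      (s := AR15.badSet R j' \ {j'}) (t := (univ : Finset (Fin a)).offDiag) ?_ ?_
    · calc (AR15.badSet R j' \ {j'}).card ≤ (univ : Finset (Fin a)).offDiag.card := this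
        _ = a * a - a := by rw [Finset.offDiag_card]; simp
    · intro j hj
      have hspec := hw j (hmemex j hj)
      rw [Finset.mem_coe, Finset.mem_offDiag]
      refine ⟨mem_univ _, mem_univ _, ?_⟩
      intro heq
      have hjne : j ≠ j' := by
        rw [Finset.mem_coe, Finset.mem_sdiff, Finset.mem_singleton] at hj; exact hj.2
      apply hjne
      apply hrow (w j).1
      rw [hspec, heq]
    · intro j1 hj1 j2 hj2 heq
      rw [Finset.mem_coe] at hj1 hj2
      have hs1 := hw j1 (hmemex j1 hj1)
      have hs2 := hw j2 (hmemex j2 hj2)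
      apply hrow (w j1).1
      rw [hs1, heq, ← hs2]
  have h2 := Finset.card_le_card_sdiff_add_card (s := AR15.badSet R j') (t := {j'})
  simp only [card_singleton] at h2
  omega

private lemma AR15.greedy {a n : ℕ} (ha : 0 < a) (R : Fin a × Fin n → ℕ)
    (hrow : ∀ i : Fin a, ∀ j j' : Fin n, R (i, j) = R (i, j') → j = j')
    (b : ℕ) (hn : (a * a - a + 1) * (b - 1) + 1 ≤ n) :
    ∀ k, k ≤ b → ∃ cols : Finset (Fin n), cols.card = k ∧
      ∀ j ∈ cols, ∀ j'' ∈ cols, ∀ i i' : Fin a, R (i, j) = R (i', j'') → j = j'' := by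
  classical
  intro k
  induction k with
  | zero => exact fun _ => ⟨∅, by simp⟩
  | succ k ih =>
    intro hk
    obtain ⟨cols, hcard, hP⟩ := ih (by omega)
    set Bad := cols.biUnion (AR15.badSet R) with hBad
    have hBadcard : Bad.card < n := by
      calc Bad.card ≤ ∑ j' ∈ cols, (AR15.badSet R j').card := card_biUnion_le
        _ ≤ ∑ _j' ∈ cols, (a * a - a + 1) :=
            Finset.sum_le_sum fun j' _ => AR15.badSet_card ha R hrow j'
        _ = k * (a * a - a + 1) := by rw [Finset.sum_const, hcard, smul_eq_mul]
        _ ≤ (b - 1) * (a * a - a + 1) := by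
            apply Nat.mul_le_mul_right; omega
        _ = (a * a - a + 1) * (b - 1) := Nat.mul_comm _ _
        _ < n := by omega
    have hne : Bad ≠ univ := by
      intro h
      rw [h, Finset.card_univ, Fintype.card_fin] at hBadcard
      omega
    have hexj : ∃ j, j ∉ Bad := by
      by_contra hc
      push_neg at hc
      have hsub : (univ : Finset (Fin n)) ⊆ Bad := fun x _ => hc x
      have := Finset.card_le_card hsub
      rw [Finset.card_univ, Fintype.card_fin] at this
      omega
    obtain ⟨j, hj⟩ := hexj
    have hjc : j ∉ cols := by
      intro hjc
      exact hj (Finset.mem_biUnion.mpr ⟨j, hjc, by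
        rw [AR15.badSet, mem_filter]; exact ⟨mem_univ _, ⟨⟨0, ha⟩, ⟨0, ha⟩, rfl⟩⟩⟩)
    refine ⟨insert j cols, by rw [card_insert_of_notMem hjc, hcard], ?_⟩
    intro j1 hj1 j2 hj2 i i' hR
    rcases Finset.mem_insert.mp hj1 with h1 | h1 <;>
      rcases Finset.mem_insert.mp hj2 with h2 | h2
    · rw [h1, h2]
    · exfalso
      apply hj
      exact Finset.mem_biUnion.mpr ⟨j2, h2, by
        rw [AR15.badSet, mem_filter]
        exact ⟨mem_univ _, ⟨i, i', h1 ▸ hR⟩⟩⟩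
    · exfalso
      apply hj
      exact Finset.mem_biUnion.mpr ⟨j1, h1, by
        rw [AR15.badSet, mem_filter]
        exact ⟨mem_univ _, ⟨i', i, h2 ▸ hR.symm⟩⟩⟩
    · exact hP j1 h1 j2 h2 i i' hR

theorem stmt_15 (a b : ℕ) (ha : 2 ≤ a)
    (hpp : IsPrimePow (a - 1) ∨ a - 1 = 1) (hb : a * (a - 1) ≤ b)
    (H1 : ∀ m n : ℕ, 0 < m → 0 < n → m < b → n ≤ (a ^ 2 - a + 1) * (b - 1) →
      ∃ R : Fin m × Fin n → ℕ, IsLatin R ∧ ¬ HasRainbow R a b)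
    (H2 : ∀ m n : ℕ, ∀ R : Fin m × Fin n → ℕ,
      (Finset.univ.image R).card < a * b →
      ¬ HasRainbow R a b ∧ ¬ HasRainbow R b a) :
    IsLeast {N : ℕ | ∃ m n : ℕ, 0 < m ∧ m ≤ n ∧ N = m * n ∧
        ∀ R : Fin m × Fin n → ℕ, IsLatin R → HasRainbow R a b ∨ HasRainbow R b a}
      (a ^ 2 * (a - 1) * (b - 1) + a * b) := by
  classical
  have haa : a * a - a + 1 = a ^ 2 - a + 1 := by rw [sq]
  have ha2 : 2 * a ≤ a * a := by nlinarith
  have hbge : 2 ≤ b := by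
    calc 2 = 2 * 1 := by ring
      _ ≤ a * (a - 1) := Nat.mul_le_mul (by omega) (by omega)
      _ ≤ b := hb
  have hab : a ≤ b := by
    calc a = a * 1 := by ring
      _ ≤ a * (a - 1) := Nat.mul_le_mul_left a (by omega)
      _ ≤ b := hb
  -- key arithmetic identity
  have hid : a * ((a ^ 2 - a + 1) * (b - 1) + 1) = a ^ 2 * (a - 1) * (b - 1) + a * b := by
    have h1 : a ^ 2 = a * a := sq a
    zify [show a ≤ a ^ 2 by nlinarith, show 1 ≤ a by omega, show 1 ≤ b by omega]
    ring
  constructor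
  · -- membership: m = a, n = (a^2 - a + 1)*(b-1)+1
    set n0 := (a ^ 2 - a + 1) * (b - 1) + 1 with hn0
    have han0 : a ≤ n0 := by
      have : a * a - a + 1 ≤ (a * a - a + 1) * (b - 1) := by
        apply Nat.le_mul_of_pos_right; omega
      rw [hn0, ← haa]
      omega
    refine ⟨a, n0, by omega, han0, hid.symm, ?_⟩
    intro R hR
    left
    obtain ⟨cols, hcard, hP⟩ := AR15.greedy (by omega) R hR.1 b
      (by rw [haa]) b le_rfl
    refine ⟨univ, cols, by simp, hcard, ?_⟩
    rintro ⟨i, j⟩ hp ⟨i', j'⟩ hq hRe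
    simp only [Finset.coe_product, Set.mem_prod, Finset.mem_coe] at hp hq
    have hjj : j = j' := hP j hp.2 j' hq.2 i i' hRe
    subst hjj
    have hii : i = i' := hR.2 i i' j hRe
    rw [hii]
  · -- lower bound
    rintro N ⟨m, n, hm, hmn, rfl, hall⟩
    by_contra hlt
    push_neg at hlt
    have hn : 0 < n := lt_of_lt_of_le hm hmn
    -- the cyclic latin rectangle
    set R0 : Fin m × Fin n → ℕ := fun p => (p.1.val + p.2.val) % n with hR0
    have hR0latin : IsLatin R0 := by
      constructor
      · intro i j j' h
        simp only [hR0] at h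
        have := Nat.ModEq.add_left_cancel' i.val h
        have hj : j.val % n = j'.val % n := this
        rw [Nat.mod_eq_of_lt j.isLt, Nat.mod_eq_of_lt j'.isLt] at hj
        exact Fin.ext hj
      · intro i i' j h
        simp only [hR0] at h
        have := Nat.ModEq.add_right_cancel' j.val h
        have hi : i.val % n = i'.val % n := this
        rw [Nat.mod_eq_of_lt (lt_of_lt_of_le i.isLt hmn),
            Nat.mod_eq_of_lt (lt_of_lt_of_le i'.isLt hmn)] at hi
        exact Fin.ext hi
    -- step: n ≥ a * b
    have hnab : a * b ≤ n := by
      by_contra hnab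
      push_neg at hnab
      have himg : (Finset.univ.image R0).card < a * b := by
        have hsub : Finset.univ.image R0 ⊆ Finset.range n := by
          intro x hx
          rw [Finset.mem_image] at hx
          obtain ⟨p, _, rfl⟩ := hx
          rw [Finset.mem_range]
          exact Nat.mod_lt _ hn
        calc (Finset.univ.image R0).card ≤ (Finset.range n).card := card_le_card hsub
          _ = n := Finset.card_range n
          _ < a * b := hnab
      obtain ⟨hA, hB⟩ := H2 m n R0 himg
      rcases hall R0 hR0latin with h | h
      · exact hA h
      · exact hB h
    -- step: m ≥ a
    have hma : a ≤ m := by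
      by_contra hma
      push_neg at hma
      rcases hall R0 hR0latin with h | h
      · exact absurd (AR15.rainbow_rows_le h) (by omega)
      · have := AR15.rainbow_rows_le h
        omega
    -- step: m < b
    have hmb : m < b := by
      by_contra hmb
      push_neg at hmb
      have h1 : b * (a * b) ≤ m * n := Nat.mul_le_mul hmb hnab
      have htarget : a ^ 2 * (a - 1) * (b - 1) + a * b ≤ b * (a * b) := by
        have h2 : a * (a - 1) ≤ b := hb
        have h3 : a ^ 2 * (a - 1) = a * (a * (a - 1)) := by ring
        have h4 : a ^ 2 * (a - 1) ≤ a * b := by rw [h3]; exact Nat.mul_le_mul_left a h2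
        calc a ^ 2 * (a - 1) * (b - 1) + a * b
            ≤ (a * b) * (b - 1) + a * b := by
              exact Nat.add_le_add_right (Nat.mul_le_mul_right _ h4) _
          _ = a * b * (b - 1 + 1) := by ring
          _ = a * b * b := by rw [Nat.sub_add_cancel (by omega)]
          _ = b * (a * b) := by ring
      omega
    -- step: n ≤ (a^2 - a + 1)*(b-1)
    have hnle : n ≤ (a ^ 2 - a + 1) * (b - 1) := by
      by_contra hnle
      push_neg at hnle
      have : a * ((a ^ 2 - a + 1) * (b - 1) + 1) ≤ m * n := Nat.mul_le_mul hma hnle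
      omega
    obtain ⟨R, hRlat, hRno⟩ := H1 m n hm hn hmb hnle
    rcases hall R hRlat with h | h
    · exact hRno h
    · exact absurd (AR15.rainbow_rows_le h) (by omega)
end
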